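/- arXiv:2407.04912 — 2 statements merged into one kernel-verified Lean document; each statement's English description precedes it below -/
import Mathlib

section
/- For a monomial algebra Λ, the following are equivalent: (1) there exists no overlap between any two perfect paths in Λ; (2) every perfect path is both elementary and co-elementary; (3) every perfect path is both a sink and a source in the Hasse quiver of (ℙ_Λ, ⪯). -/
/-! Combinatorial model of a monomial algebra `Λ = KQ/I`.

A finite quiver is given by source and target maps on a type of arrows.
A (nontrivial) path is encoded as a nonempty list of composable arrows;
the admissible monomial ideal `I` is encoded by its set `F` of minimal
generating paths, and a path is zero in `Λ` iff it contains a member of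
`F` as a contiguous subpath (infix). -/

/-- A quiver structure on arrow type `E` with vertex type `V`. -/
structure QuiverData (V E : Type) where
  src : E → V
  tgt : E → V

namespace QuiverData

variable {V E : Type} (Q : QuiverData V E)

/-- `l` is the list of arrows of a path of `Q`. -/
def IsPath (l : List E) : Prop := l.Chain' fun a b => Q.tgt a = Q.src b

/-- Two paths are composable: the target of the first equals the source of
the second (vacuously true if one of them is trivial). -/
def Composable (l m : List E) : Prop :=
  ∀ a ∈ l.getLast?, ∀ b ∈ m.head?, Q.tgt a = Q.src b

end QuiverData

/-- A monomial algebra, encoded combinatorially: a finite quiver together with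
the set `F` of minimal paths generating the admissible monomial ideal `I`. -/
structure MonomialData (V E : Type) extends QuiverData V E where
  F : Set (List E)
  F_path : ∀ f ∈ F, toQuiverData.IsPath f
  F_len : ∀ f ∈ F, 2 ≤ f.length
  F_min : ∀ f ∈ F, ∀ g, g <:+: f → (∃ f' ∈ F, f' <:+: g) → g = f
  admissible : ∃ N, ∀ l, toQuiverData.IsPath l → N ≤ l.length → ∃ f ∈ F, f <:+: l

namespace MonomialData

variable {V E : Type} (M : MonomialData V E)

/-- The path `l` is zero in `Λ`. -/
def IsZero (l : List E) : Prop := ∃ f ∈ M.F, f <:+: l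

/-- `l` is a path which is nonzero in `Λ`. -/
def Nonzero (l : List E) : Prop := M.toQuiverData.IsPath l ∧ ¬ M.IsZero l

/-- A perfect pair of nonzero nontrivial paths, after Chen–Shen–Zhou. -/
def PerfectPair (p q : List E) : Prop :=
  p ≠ [] ∧ q ≠ [] ∧ M.Nonzero p ∧ M.Nonzero q ∧
  M.toQuiverData.Composable p q ∧ M.IsZero (p ++ q) ∧
  (∀ q', q' ≠ [] → M.Nonzero q' → M.toQuiverData.Composable p q' →
      M.IsZero (p ++ q') → q <+: q') ∧
  (∀ p', p' ≠ [] → M.Nonzero p' → M.toQuiverData.Composable p' q →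
      M.IsZero (p' ++ q) → p <:+ p')

/-- A perfect path: a path appearing in a perfect path sequence
`(p₁, …, pₙ, pₙ₊₁ = p₁)`, encoded by a periodic sequence of paths each of
whose consecutive pairs is perfect. -/
def IsPerfect (p : List E) : Prop :=
  ∃ (n : ℕ) (s : ℕ → List E), 0 < n ∧ s 0 = p ∧ (∀ i, s (i + n) = s i) ∧
    ∀ i, M.PerfectPair (s i) (s (i + 1))

/-- `c` is the underlying cycle associated with the perfect path `p`:
the shortest cycle `c` with `p₁ ⋯ pₙ = cˡ` for some `l > 0`, for a perfect
path sequence through `p`. -/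
def IsUnderlyingCycleOf (c p : List E) : Prop :=
  ∃ (n : ℕ) (s : ℕ → List E), 0 < n ∧ s 0 = p ∧ (∀ i, s (i + n) = s i) ∧
    (∀ i, M.PerfectPair (s i) (s (i + 1))) ∧
    (∃ l, 0 < l ∧ ((List.range n).map s).flatten = (List.replicate l c).flatten) ∧
    (∀ c' l', 0 < l' → ((List.range n).map s).flatten = (List.replicate l' c').flatten →
      c.length ≤ c'.length)


/-- There is an overlap between the perfect paths `p` and `q` (`p` overlaps `q`). -/
def Overlap (p q : List E) : Prop :=
  ∃ x p' q' : List E, x ≠ [] ∧ p = p' ++ x ∧ q = x ++ q' ∧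
    M.Nonzero (p' ++ x ++ q') ∧ (p = q → p' ≠ [] ∧ q' ≠ [])

/-- An elementary perfect path: a source in the Hasse quiver of the left
divisibility order `⪯` on perfect paths, i.e. it is not a proper left divisor
of any perfect path. -/
def Elementary (p : List E) : Prop :=
  M.IsPerfect p ∧ ¬ ∃ q, M.IsPerfect q ∧ p <+: q ∧ p ≠ q

/-- A co-elementary perfect path: a sink in the Hasse quiver of `⪯`, i.e.
no proper left divisor of it is perfect. -/
def CoElementary (p : List E) : Prop :=
  M.IsPerfect p ∧ ¬ ∃ q, M.IsPerfect q ∧ q <+: p ∧ q ≠ p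

/-- There is an arrow `q ⟶ p` in the Hasse quiver of `(ℙ_Λ, ⪯)`:
`p ≺ q` and no perfect path lies strictly between them. -/
def HasseArrowPrec (q p : List E) : Prop :=
  M.IsPerfect p ∧ M.IsPerfect q ∧ p <+: q ∧ p ≠ q ∧
    ¬ ∃ r, M.IsPerfect r ∧ p <+: r ∧ p ≠ r ∧ r <+: q ∧ r ≠ q

end MonomialData

/-- Two cycles are equivalent (agree up to cyclic permutation): each is a
subpath of a power of the other. -/
def CyclesEquiv {E : Type} (c d : List E) : Prop :=
  ∃ m k, 0 < m ∧ 0 < k ∧ c <:+: (List.replicate m d).flatten ∧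
    d <:+: (List.replicate k c).flatten

open List

section ListAux
variable {α : Type}

private lemma sfx_eq_of_len {a b l : List α} (ha : a <:+ l) (hb : b <:+ l)
    (h : a.length = b.length) : a = b :=
  (suffix_of_suffix_length_le ha hb h.le).eq_of_length h

private lemma last?_suffix {x l : List α} (hx : x ≠ []) (h : x <:+ l) :
    l.getLast? = x.getLast? := by
  obtain ⟨t, rfl⟩ := h; exact List.getLast?_append_of_ne_nil t hx

private lemma head?_prefix {x l : List α} (hx : x ≠ []) (h : x <+: l) :
    l.head? = x.head? := by
  obtain ⟨t, rfl⟩ := h; exact List.head?_append_of_ne_nil x hx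

private lemma prefix_cancel {a b c : List α} (h : a ++ b <+: a ++ c) : b <+: c := by
  obtain ⟨t, ht⟩ := h
  rw [List.append_assoc] at ht
  exact ⟨t, List.append_cancel_left ht⟩

private lemma suffix_cancel {a b c : List α} (h : b ++ a <:+ c ++ a) : b <:+ c := by
  obtain ⟨t, ht⟩ := h
  rw [← List.append_assoc] at ht
  exact ⟨t, List.append_cancel_right ht⟩

private lemma infix_split {f a b : List α} (h : f <:+: a ++ b) (ha : ¬ f <:+: a)
    (hb : ¬ f <:+: b) :
    ∃ y z, y ≠ [] ∧ z ≠ [] ∧ f = y ++ z ∧ y <:+ a ∧ z <+: b := by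
  obtain ⟨l, r, hlr⟩ := h
  have hl : l <+: a ++ b := ⟨f ++ r, by simpa [List.append_assoc] using hlr⟩
  have hlf : l ++ f <+: a ++ b := ⟨r, by simpa [List.append_assoc] using hlr⟩
  have h1 : ¬ (l.length + f.length ≤ a.length) := by
    intro hle
    have hfa : l ++ f <+: a := prefix_of_prefix_length_le hlf (List.prefix_append a b)
      (by simpa using hle)
    exact ha ((List.suffix_append l f).isInfix.trans hfa.isInfix)
  have h2 : l.length < a.length := by
    by_contra h2
    push_neg at h2
    have hal : a <+: l := prefix_of_prefix_length_le (List.prefix_append a b) hl h2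
    obtain ⟨l', rfl⟩ := hal
    have : l' ++ (f ++ r) = b := by
      have := hlr
      rw [List.append_assoc, List.append_assoc] at this
      exact List.append_cancel_left this
    exact hb ⟨l', r, by simpa [List.append_assoc] using this⟩
  have hla : l <+: a := prefix_of_prefix_length_le hl (List.prefix_append a b) h2.le
  obtain ⟨y, rfl⟩ := hla
  have hy : y ≠ [] := by rintro rfl; simp at h2
  have hyb : y ++ b = f ++ r := by
    have := hlr
    rw [List.append_assoc, List.append_assoc] at this
    exact (List.append_cancel_left this).symm
  have hyf : y <+: f := by
    refine prefix_of_prefix_length_le ⟨b, hyb⟩ (List.prefix_append f r) ?_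
    simp only [List.length_append] at h1 ⊢
    omega
  obtain ⟨z, rfl⟩ := hyf
  have hz : z ≠ [] := by
    rintro rfl
    exact h1 (by simp [List.length_append])
  refine ⟨y, z, hy, hz, rfl, List.suffix_append l y, ?_⟩
  rw [List.append_assoc] at hyb
  exact ⟨r, (List.append_cancel_left hyb).symm⟩

private lemma per_mod {β : Type*} (f : ℕ → β) (n : ℕ) (hn : 0 < n)
    (h : ∀ i, f (i + n) = f i) : ∀ a, f a = f (a % n) := by
  intro a
  induction a using Nat.strong_induction_on with
  | _ a ih =>
    rcases lt_or_ge a n with hlt | hle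
    · rw [Nat.mod_eq_of_lt hlt]
    · calc f a = f (a - n + n) := by rw [Nat.sub_add_cancel hle]
        _ = f (a - n) := h _
        _ = f ((a - n) % n) := ih _ (by omega)
        _ = f (a % n) := by rw [← Nat.mod_eq_sub_mod hle]

private lemma per_congr {β : Type*} (f : ℕ → β) (n : ℕ) (hn : 0 < n)
    (h : ∀ i, f (i + n) = f i) {a b : ℕ} (hab : a % n = b % n) : f a = f b := by
  rw [per_mod f n hn h a, per_mod f n hn h b, hab]

end ListAux

namespace MonomialData
open List

variable {V E : Type} {M : MonomialData V E}

lemma IsZero.of_infix {l m : List E} (h : M.IsZero l) (hlm : l <:+: m) : M.IsZero m :=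
  let ⟨f, hf, hfl⟩ := h; ⟨f, hf, hfl.trans hlm⟩

lemma isPath_of_infix {l m : List E} (h : M.toQuiverData.IsPath m) (hlm : l <:+: m) :
    M.toQuiverData.IsPath l := List.IsChain.infix h hlm

lemma Nonzero.of_infix {l m : List E} (h : M.Nonzero m) (hlm : l <:+: m) : M.Nonzero l :=
  ⟨isPath_of_infix h.1 hlm, fun hz => h.2 (hz.of_infix hlm)⟩

lemma comp_junction {a b : List E} (h : M.toQuiverData.IsPath (a ++ b)) :
    M.toQuiverData.Composable a b := (List.isChain_append.mp h).2.2

lemma comp_congr {a b c d : List E} (h : M.toQuiverData.Composable a b)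
    (hc : c.getLast? = a.getLast?) (hd : d.head? = b.head?) :
    M.toQuiverData.Composable c d := fun e he f hf => h e (hc ▸ he) f (hd ▸ hf)

section PP
variable {p q : List E} (h : M.PerfectPair p q)

lemma PerfectPair.neL (h : M.PerfectPair p q) : p ≠ [] := h.1
lemma PerfectPair.neR (h : M.PerfectPair p q) : q ≠ [] := h.2.1
lemma PerfectPair.nzL (h : M.PerfectPair p q) : M.Nonzero p := h.2.2.1
lemma PerfectPair.nzR (h : M.PerfectPair p q) : M.Nonzero q := h.2.2.2.1
lemma PerfectPair.comp (h : M.PerfectPair p q) : M.toQuiverData.Composable p q :=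
  h.2.2.2.2.1
lemma PerfectPair.zero (h : M.PerfectPair p q) : M.IsZero (p ++ q) := h.2.2.2.2.2.1
lemma PerfectPair.minR (h : M.PerfectPair p q) :
    ∀ q', q' ≠ [] → M.Nonzero q' → M.toQuiverData.Composable p q' →
      M.IsZero (p ++ q') → q <+: q' := h.2.2.2.2.2.2.1
lemma PerfectPair.minL (h : M.PerfectPair p q) :
    ∀ p', p' ≠ [] → M.Nonzero p' → M.toQuiverData.Composable p' q →
      M.IsZero (p' ++ q) → p <:+ p' := h.2.2.2.2.2.2.2

end PP

/-- A perfect pair concatenates to a minimal relation. -/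
lemma PerfectPair.concat_mem {p q : List E} (h : M.PerfectPair p q) : p ++ q ∈ M.F := by
  obtain ⟨f, hfF, hinf⟩ := h.zero
  have hfp : ¬ f <:+: p := fun hc => h.nzL.2 ⟨f, hfF, hc⟩
  have hfq : ¬ f <:+: q := fun hc => h.nzR.2 ⟨f, hfF, hc⟩
  obtain ⟨y, z, hy, hz, rfl, hysuf, hzpre⟩ := infix_split hinf hfp hfq
  have hfpath : M.toQuiverData.IsPath (y ++ z) := M.F_path _ hfF
  have hjunc := comp_junction hfpath
  -- first: z = q
  have hzq : z = q := by
    have hzero : M.IsZero (p ++ z) := by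
      obtain ⟨t, rfl⟩ := hysuf
      exact ⟨y ++ z, hfF, ⟨t, [], by simp⟩⟩
    have hcomp : M.toQuiverData.Composable p z :=
      comp_congr hjunc (last?_suffix hy hysuf) rfl
    have := h.minR z hz (h.nzR.of_infix hzpre.isInfix) hcomp hzero
    exact (hzpre.eq_of_length_le this.length_le)
  have hyp : y = p := by
    have hcomp : M.toQuiverData.Composable y q := by
      refine comp_congr hjunc rfl ?_
      rw [hzq]
    have h1 := h.minL y hy (h.nzL.of_infix hysuf.isInfix) hcomp
      ⟨y ++ z, hfF, by rw [hzq]⟩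
    exact hysuf.eq_of_length (le_antisymm hysuf.length_le h1.length_le)
  rw [hyp, hzq] at hfF
  exact hfF

end MonomialData

namespace MonomialData
open List
variable {V E : Type} {M : MonomialData V E}

lemma isPerfect_seq {s : ℕ → List E} {n : ℕ} (hn : 0 < n) (hper : ∀ i, s (i + n) = s i)
    (hpair : ∀ i, M.PerfectPair (s i) (s (i + 1))) (i : ℕ) : M.IsPerfect (s i) := by
  refine ⟨n, fun j => s (i + j), hn, rfl, fun j => ?_, fun j => ?_⟩
  · show s (i + (j + n)) = s (i + j)
    rw [show i + (j + n) = i + j + n from by omega, hper]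
  · exact hpair (i + j)

lemma IsPerfect.ne_nil {p : List E} (h : M.IsPerfect p) : p ≠ [] := by
  obtain ⟨n, s, hn, h0, hper, hpair⟩ := h
  exact h0 ▸ (hpair 0).neL

lemma IsPerfect.nonzero {p : List E} (h : M.IsPerfect p) : M.Nonzero p := by
  obtain ⟨n, s, hn, h0, hper, hpair⟩ := h
  exact h0 ▸ (hpair 0).nzL

lemma caseC {s u : ℕ → List E}
    (hs : ∀ i, M.PerfectPair (s i) (s (i + 1)))
    (hu : ∀ i, M.PerfectPair (u i) (u (i + 1)))
    (hps : ∀ i, M.IsPerfect (s i)) (hpu : ∀ i, M.IsPerfect (u i))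
    (H2 : ∀ a b, M.IsPerfect a → M.IsPerfect b → a <+: b → a = b)
    {i : ℕ} {A : List E} (hA : A ≠ []) (heq : s i = A ++ u i) : False := by
  have pu := hu i
  have ps := hs i
  have husuf : u i <:+ s i := heq ▸ List.suffix_append A (u i)
  have hz1 : M.IsZero (s i ++ u (i + 1)) :=
    pu.zero.of_infix ⟨A, [], by simp [heq, List.append_assoc]⟩
  have hcomp : M.toQuiverData.Composable (s i) (u (i + 1)) :=
    comp_congr pu.comp (last?_suffix pu.neL husuf) rfl
  have hpre := ps.minR _ pu.neR pu.nzR hcomp hz1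
  have heq2 : s (i + 1) = u (i + 1) := H2 _ _ (hps (i + 1)) (hpu (i + 1)) hpre
  have hz2 : M.IsZero (u i ++ s (i + 1)) := by rw [heq2]; exact pu.zero
  have hcomp2 : M.toQuiverData.Composable (u i) (s (i + 1)) :=
    comp_congr pu.comp rfl (by rw [heq2])
  have hsuf := ps.minL _ pu.neL pu.nzL hcomp2 hz2
  have hle := hsuf.length_le
  rw [heq, List.length_append] at hle
  have : A.length = 0 := by omega
  exact hA (List.length_eq_zero_iff.mp this)

lemma step {s u : ℕ → List E}
    (hs : ∀ i, M.PerfectPair (s i) (s (i + 1)))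
    (hu : ∀ i, M.PerfectPair (u i) (u (i + 1)))
    (hps : ∀ i, M.IsPerfect (s i)) (hpu : ∀ i, M.IsPerfect (u i))
    (H2 : ∀ a b, M.IsPerfect a → M.IsPerfect b → a <+: b → a = b)
    {i : ℕ} {x B : List E} (hx : x ≠ []) (hB : B ≠ []) (hu3 : u i = x ++ B)
    (hxs : x <:+ s i) (hw : M.Nonzero (s i ++ B)) :
    ∃ x' B', x' = (s (i + 1)).drop B.length ∧ B' = (u (i + 1)).drop x'.length ∧
      x' ≠ [] ∧ B' ≠ [] ∧ s (i + 1) = B ++ x' ∧ u (i + 1) = x' ++ B' ∧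
      M.Nonzero (s (i + 1) ++ B') := by
  have pu := hu i
  have ps := hs i
  have hBsuf : B <:+ u i := hu3 ▸ List.suffix_append x B
  have hupath : M.toQuiverData.IsPath (u i) := pu.nzL.1
  have hBpath : M.toQuiverData.IsPath B := isPath_of_infix hupath hBsuf.isInfix
  have hcompB : M.toQuiverData.Composable B (u (i + 1)) :=
    comp_congr pu.comp (last?_suffix hB hBsuf).symm rfl
  have hnzB : M.Nonzero B := pu.nzL.of_infix hBsuf.isInfix
  have hnzBu : M.Nonzero (B ++ u (i + 1)) := by
    constructor
    · exact List.isChain_append.mpr ⟨hBpath, pu.nzR.1, hcompB⟩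
    · intro hzero
      have hle := (pu.minL B hB hnzB hcompB hzero).length_le
      rw [hu3, List.length_append] at hle
      have : x.length = 0 := by omega
      exact hx (List.length_eq_zero_iff.mp this)
  have hz1 : M.IsZero (s i ++ (B ++ u (i + 1))) := by
    obtain ⟨t, ht⟩ := hxs
    exact pu.zero.of_infix ⟨t, [], by rw [hu3]; simp [← ht, List.append_assoc]⟩
  have hcomp1 : M.toQuiverData.Composable (s i) (B ++ u (i + 1)) := by
    have hxBj : M.toQuiverData.Composable x B := comp_junction (hu3 ▸ hupath)
    exact comp_congr hxBj (last?_suffix hx hxs)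
      (head?_prefix hB (List.prefix_append B (u (i + 1))))
  have hBune : B ++ u (i + 1) ≠ [] := fun hh => hB (List.append_eq_nil_iff.mp hh).1
  have hpre : s (i + 1) <+: B ++ u (i + 1) := ps.minR _ hBune hnzBu hcomp1 hz1
  have hlen : B.length < (s (i + 1)).length := by
    by_contra hcon
    push_neg at hcon
    have hsubB : s (i + 1) <+: B :=
      prefix_of_prefix_length_le hpre (List.prefix_append B _) hcon
    obtain ⟨t2, ht2⟩ := hsubB
    have : M.IsZero (s i ++ B) :=
      (hs i).zero.of_infix ⟨[], t2, by simp [← ht2, List.append_assoc]⟩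
    exact hw.2 this
  have hBpre : B <+: s (i + 1) :=
    prefix_of_prefix_length_le (List.prefix_append B _) hpre hlen.le
  obtain ⟨x', hx'⟩ := hBpre
  have eqx' : x' = (s (i + 1)).drop B.length := by rw [← hx']; simp
  have hx'ne : x' ≠ [] := by
    intro hcon
    rw [← hx', hcon, List.append_nil] at hlen
    exact lt_irrefl _ hlen
  have hx'pre : x' <+: u (i + 1) := prefix_cancel (a := B) (by rw [hx']; exact hpre)
  obtain ⟨B', hB'⟩ := hx'pre
  have eqB' : B' = (u (i + 1)).drop x'.length := by rw [← hB']; simp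
  have hnz' : M.Nonzero (s (i + 1) ++ B') := by
    rw [← hx', List.append_assoc, hB']; exact hnzBu
  have hB'ne : B' ≠ [] := by
    intro hcon
    rw [hcon, List.append_nil] at hB'
    exact caseC hs hu hps hpu H2 (i := i + 1) hB (by rw [← hx', hB'])
  exact ⟨x', B', eqx', eqB', hx'ne, hB'ne, hx'.symm, hB'.symm, hnz'⟩

end MonomialData

namespace MonomialData
open List
variable {V E : Type}

/-- The interleaving configuration produced by an overlap of perfect paths. -/
structure Interleave (M : MonomialData V E) where
  s : ℕ → List E
  u : ℕ → List E
  x : ℕ → List E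
  B : ℕ → List E
  hs : ∀ i, M.PerfectPair (s i) (s (i + 1))
  hu : ∀ i, M.PerfectPair (u i) (u (i + 1))
  hx : ∀ i, x i ≠ []
  hB : ∀ i, B i ≠ []
  hu3 : ∀ i, u i = x i ++ B i
  hxs : ∀ i, x i <:+ s i
  hw : ∀ i, M.Nonzero (s i ++ B i)
  hlink : ∀ i, s (i + 1) = B i ++ x (i + 1)

namespace Interleave

variable {M : MonomialData V E} (c : Interleave M)

lemma pathS (j : ℕ) : M.toQuiverData.IsPath (c.s j) := (c.hs j).nzL.1
lemma pathU (j : ℕ) : M.toQuiverData.IsPath (c.u j) := (c.hu j).nzL.1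
lemma xpreU (j : ℕ) : c.x j <+: c.u j := by rw [c.hu3 j]; exact List.prefix_append _ _
lemma BsufU (j : ℕ) : c.B j <:+ c.u j := by rw [c.hu3 j]; exact List.suffix_append _ _
lemma BpreS (j : ℕ) : c.B j <+: c.s (j + 1) := by
  rw [c.hlink j]; exact List.prefix_append _ _
lemma nzX (j : ℕ) : M.Nonzero (c.x j) := (c.hu j).nzL.of_infix (c.xpreU j).isInfix
lemma nzB (j : ℕ) : M.Nonzero (c.B j) := (c.hu j).nzL.of_infix (c.BsufU j).isInfix
lemma Wne (j : ℕ) : c.s (j + 1) ++ c.B (j + 1) ≠ [] :=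
  fun hh => (c.hs (j + 1)).neL (List.append_eq_nil_iff.mp hh).1
lemma hWeq (j : ℕ) : c.s (j + 1) ++ c.B (j + 1) = c.B j ++ c.u (j + 1) := by
  rw [c.hlink j, c.hu3 (j + 1), List.append_assoc]
lemma juncXB (j : ℕ) : M.toQuiverData.Composable (c.x j) (c.B j) :=
  comp_junction (by rw [← c.hu3 j]; exact c.pathU j)
lemma juncBX (j : ℕ) : M.toQuiverData.Composable (c.B j) (c.x (j + 1)) :=
  comp_junction (by rw [← c.hlink j]; exact c.pathS (j + 1))
lemma lastS (j : ℕ) : (c.s j).getLast? = (c.x j).getLast? :=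
  last?_suffix (c.hx j) (c.hxs j)
lemma lastU (j : ℕ) : (c.u j).getLast? = (c.B j).getLast? :=
  last?_suffix (c.hB j) (c.BsufU j)
lemma headU (j : ℕ) : (c.u j).head? = (c.x j).head? :=
  head?_prefix (c.hx j) (c.xpreU j)
lemma headS (j : ℕ) : (c.s (j + 1)).head? = (c.B j).head? :=
  head?_prefix (c.hB j) (c.BpreS j)
lemma lastW (j : ℕ) : (c.s (j + 1) ++ c.B (j + 1)).getLast? = (c.B (j + 1)).getLast? :=
  last?_suffix (c.hB (j + 1)) (List.suffix_append _ _)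
lemma headW (j : ℕ) : (c.s (j + 1) ++ c.B (j + 1)).head? = (c.B j).head? := by
  rw [head?_prefix (c.hs (j + 1)).neL (List.prefix_append _ _), c.headS j]

/-- Key Lemma A : `(x_j, B_j x_{j+1} B_{j+1})` is a perfect pair. -/
lemma lemA (j : ℕ) : M.PerfectPair (c.x j) (c.s (j + 1) ++ c.B (j + 1)) := by
  refine ⟨c.hx j, c.Wne j, c.nzX j, c.hw (j + 1), ?_, ?_, ?_, ?_⟩
  · exact comp_congr (c.juncXB j) rfl (c.headW j)
  · have hEq : c.x j ++ (c.s (j + 1) ++ c.B (j + 1)) = c.u j ++ c.u (j + 1) := by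
      rw [c.hWeq j, c.hu3 j, List.append_assoc]
    rw [hEq]; exact (c.hu j).zero
  · -- minimal right complements
    intro q1 hq1ne hq1nz hq1comp hq1zero
    obtain ⟨f, hfF, hinf⟩ := hq1zero
    have h1 : ¬ f <:+: c.x j := fun hc => (c.nzX j).2 ⟨f, hfF, hc⟩
    have h2 : ¬ f <:+: q1 := fun hc => hq1nz.2 ⟨f, hfF, hc⟩
    obtain ⟨y, z, hy, hz, hf, hysuf, hzpre⟩ := infix_split hinf h1 h2
    have hjunc : M.toQuiverData.Composable y z :=
      comp_junction (by rw [← hf]; exact M.F_path _ hfF)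
    have hysufS : y <:+ c.s j := hysuf.trans (c.hxs j)
    obtain ⟨t, ht⟩ := hysufS
    have hz1 : M.IsZero (c.s j ++ z) :=
      ⟨f, hfF, ⟨t, [], by rw [hf]; simp [← ht, List.append_assoc]⟩⟩
    have hcomp1 : M.toQuiverData.Composable (c.s j) z :=
      comp_congr hjunc (last?_suffix hy ⟨t, ht⟩) rfl
    have hnz_z : M.Nonzero z := hq1nz.of_infix hzpre.isInfix
    have hpre1 : c.s (j + 1) <+: q1 :=
      ((c.hs j).minR z hz hnz_z hcomp1 hz1).trans hzpre
    rw [c.hlink j] at hpre1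
    obtain ⟨q2, hq2⟩ := hpre1
    have hzero2 : M.IsZero (c.u j ++ (c.x (j + 1) ++ q2)) := by
      have hEq : c.u j ++ (c.x (j + 1) ++ q2) = c.x j ++ q1 := by
        rw [c.hu3 j, ← hq2]; simp [List.append_assoc]
      rw [hEq]; exact ⟨f, hfF, hinf⟩
    have hnz2 : M.Nonzero (c.x (j + 1) ++ q2) :=
      hq1nz.of_infix ⟨c.B j, [], by rw [← hq2]; simp [List.append_assoc]⟩
    have hcomp2 : M.toQuiverData.Composable (c.u j) (c.x (j + 1) ++ q2) :=
      comp_congr (c.juncBX j) (c.lastU j)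
        (head?_prefix (c.hx (j + 1)) (List.prefix_append _ _))
    have hne2 : c.x (j + 1) ++ q2 ≠ [] :=
      fun hh => c.hx (j + 1) (List.append_eq_nil_iff.mp hh).1
    have hpre2 := (c.hu j).minR _ hne2 hnz2 hcomp2 hzero2
    rw [c.hu3 (j + 1)] at hpre2
    obtain ⟨q3, hq3⟩ := prefix_cancel hpre2
    exact ⟨q3, by rw [c.hlink j, ← hq2, ← hq3]; simp [List.append_assoc]⟩
  · -- minimal left complements
    intro p1 hp1ne hp1nz hp1comp hp1zero
    obtain ⟨f, hfF, hinf⟩ := hp1zero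
    have h1 : ¬ f <:+: p1 := fun hc => hp1nz.2 ⟨f, hfF, hc⟩
    have h2 : ¬ f <:+: (c.s (j + 1) ++ c.B (j + 1)) := fun hc =>
      (c.hw (j + 1)).2 ⟨f, hfF, hc⟩
    obtain ⟨y, t, hy, ht, hf, hysuf, htpre⟩ := infix_split hinf h1 h2
    have hjunc : M.toQuiverData.Composable y t :=
      comp_junction (by rw [← hf]; exact M.F_path _ hfF)
    by_cases hcase : t.length ≤ (c.s (j + 1)).length
    · have htpre2 : t <+: c.s (j + 1) :=
        prefix_of_prefix_length_le htpre (List.prefix_append _ _) hcase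
      obtain ⟨r, hr⟩ := htpre2
      have hz1 : M.IsZero (y ++ c.s (j + 1)) :=
        ⟨f, hfF, ⟨[], r, by rw [hf]; simp [← hr, List.append_assoc]⟩⟩
      have hcomp1 : M.toQuiverData.Composable y (c.s (j + 1)) :=
        comp_congr hjunc rfl (head?_prefix ht ⟨r, hr⟩)
      have hsuf1 : c.s j <:+ y :=
        (c.hs j).minL y hy (hp1nz.of_infix hysuf.isInfix) hcomp1 hz1
      exact ((c.hxs j).trans hsuf1).trans hysuf
    · push_neg at hcase
      have hspre : c.s (j + 1) <+: t :=
        prefix_of_prefix_length_le (List.prefix_append _ _) htpre hcase.le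
      obtain ⟨t', ht'⟩ := hspre
      have ht'pre : t' <+: c.B (j + 1) :=
        prefix_cancel (a := c.s (j + 1)) (by rw [ht']; exact htpre)
      obtain ⟨r, hr⟩ := ht'pre
      have hzYB : M.IsZero ((y ++ c.B j) ++ c.u (j + 1)) := by
        refine ⟨f, hfF, ⟨[], r, ?_⟩⟩
        rw [hf, ← ht', c.hlink j, c.hu3 (j + 1), ← hr]
        simp [List.append_assoc]
      have hfpre : y ++ c.B j <+: f :=
        ⟨c.x (j + 1) ++ t', by rw [hf, ← ht', c.hlink j]; simp [List.append_assoc]⟩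
      have hYBnz : M.Nonzero (y ++ c.B j) := by
        constructor
        · exact isPath_of_infix (M.F_path _ hfF) hfpre.isInfix
        · rintro ⟨f2, hf2, hinf2⟩
          have heqf := M.F_min f hfF (y ++ c.B j) hfpre.isInfix ⟨f2, hf2, hinf2⟩
          have hlf := congrArg List.length heqf
          rw [hf, ← ht', c.hlink j] at hlf
          simp only [List.length_append] at hlf
          have hxp : 0 < (c.x (j + 1)).length := List.length_pos_iff.mpr (c.hx (j + 1))
          omega
      have hcompYB : M.toQuiverData.Composable (y ++ c.B j) (c.u (j + 1)) :=
        comp_congr (c.juncBX j)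
          (last?_suffix (c.hB j) (List.suffix_append y (c.B j))) (c.headU (j + 1))
      have hYBne : y ++ c.B j ≠ [] := fun hh => hy (List.append_eq_nil_iff.mp hh).1
      have hsufU := (c.hu j).minL _ hYBne hYBnz hcompYB hzYB
      rw [c.hu3 j] at hsufU
      exact (suffix_cancel hsufU).trans hysuf


end Interleave
end MonomialData

namespace MonomialData
namespace Interleave
open List
variable {V E : Type} {M : MonomialData V E} (c : Interleave M)

/-- Key Lemma B : `(B_j x_{j+1} B_{j+1}, x_{j+2})` is a perfect pair. -/
lemma lemB (j : ℕ) : M.PerfectPair (c.s (j + 1) ++ c.B (j + 1)) (c.x (j + 2)) := by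
  refine ⟨c.Wne j, c.hx (j + 2), c.hw (j + 1), c.nzX (j + 2), ?_, ?_, ?_, ?_⟩
  · exact comp_congr (c.juncBX (j + 1)) (c.lastW j) rfl
  · have hEq : (c.s (j + 1) ++ c.B (j + 1)) ++ c.x (j + 2) = c.s (j + 1) ++ c.s (j + 2) := by
      rw [c.hlink (j + 1), List.append_assoc]
    rw [hEq]; exact (c.hs (j + 1)).zero
  · -- minimal right complements
    intro q1 hq1ne hq1nz hq1comp hq1zero
    obtain ⟨f, hfF, hinf⟩ := hq1zero
    have h1 : ¬ f <:+: (c.s (j + 1) ++ c.B (j + 1)) := fun hc =>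
      (c.hw (j + 1)).2 ⟨f, hfF, hc⟩
    have h2 : ¬ f <:+: q1 := fun hc => hq1nz.2 ⟨f, hfF, hc⟩
    obtain ⟨y, z, hy, hz, hf, hysuf, hzpre⟩ := infix_split hinf h1 h2
    have hjunc : M.toQuiverData.Composable y z :=
      comp_junction (by rw [← hf]; exact M.F_path _ hfF)
    have hnz_z : M.Nonzero z := hq1nz.of_infix hzpre.isInfix
    have husuf : c.u (j + 1) <:+ c.s (j + 1) ++ c.B (j + 1) := by
      rw [c.hWeq j]; exact List.suffix_append _ _
    have key : M.IsZero (c.u (j + 1) ++ z) → c.x (j + 2) <+: q1 := by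
      intro hzu
      have hcompu : M.toQuiverData.Composable (c.u (j + 1)) z :=
        comp_congr hjunc ((c.lastU (j + 1)).trans
          ((c.lastW j).symm.trans (last?_suffix hy hysuf))) rfl
      have hpre := (c.hu (j + 1)).minR z hz hnz_z hcompu hzu
      exact ((c.xpreU (j + 2)).trans hpre).trans hzpre
    by_cases hcase : y.length ≤ (c.u (j + 1)).length
    · have hysufu : y <:+ c.u (j + 1) := suffix_of_suffix_length_le hysuf husuf hcase
      obtain ⟨r, hr⟩ := hysufu
      exact key ⟨f, hfF, ⟨r, [], by rw [hf]; simp [← hr, List.append_assoc]⟩⟩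
    · push_neg at hcase
      have hupre : c.u (j + 1) <:+ y := suffix_of_suffix_length_le husuf hysuf hcase.le
      obtain ⟨y', hy'⟩ := hupre
      by_cases hzB : M.IsZero (c.B (j + 1) ++ z)
      · exact key (hzB.of_infix ⟨c.x (j + 1), [],
          by rw [c.hu3 (j + 1)]; simp [List.append_assoc]⟩)
      · have hBzinf : c.B (j + 1) ++ z <:+ f :=
          ⟨y' ++ c.x (j + 1), by rw [hf, ← hy', c.hu3 (j + 1)]; simp [List.append_assoc]⟩
        have hnzBz : M.Nonzero (c.B (j + 1) ++ z) :=
          ⟨isPath_of_infix (M.F_path _ hfF) hBzinf.isInfix, hzB⟩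
        obtain ⟨w0, hw0⟩ := hysuf
        have hzSB : M.IsZero (c.s (j + 1) ++ (c.B (j + 1) ++ z)) :=
          ⟨f, hfF, ⟨w0, [], by
            rw [hf]; simp only [List.append_nil, ← List.append_assoc, hw0]⟩⟩
        have hcompSB : M.toQuiverData.Composable (c.s (j + 1)) (c.B (j + 1) ++ z) :=
          comp_congr (c.juncXB (j + 1)) (c.lastS (j + 1))
            (head?_prefix (c.hB (j + 1)) (List.prefix_append _ _))
        have hBzne : c.B (j + 1) ++ z ≠ [] :=
          fun hh => c.hB (j + 1) (List.append_eq_nil_iff.mp hh).1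
        have hpre := (c.hs (j + 1)).minR _ hBzne hnzBz hcompSB hzSB
        rw [c.hlink (j + 1)] at hpre
        exact (prefix_cancel hpre).trans hzpre
  · -- minimal left complements
    intro p1 hp1ne hp1nz hp1comp hp1zero
    obtain ⟨f, hfF, hinf⟩ := hp1zero
    have h1 : ¬ f <:+: p1 := fun hc => hp1nz.2 ⟨f, hfF, hc⟩
    have h2 : ¬ f <:+: c.x (j + 2) := fun hc => (c.nzX (j + 2)).2 ⟨f, hfF, hc⟩
    obtain ⟨y, t, hy, ht, hf, hysuf, htpre⟩ := infix_split hinf h1 h2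
    have hjunc : M.toQuiverData.Composable y t :=
      comp_junction (by rw [← hf]; exact M.F_path _ hfF)
    obtain ⟨r, hr⟩ := htpre
    have hzYU : M.IsZero (y ++ c.u (j + 2)) :=
      ⟨f, hfF, ⟨[], r ++ c.B (j + 2), by
        rw [hf, c.hu3 (j + 2), ← hr]; simp [List.append_assoc]⟩⟩
    have hcompYU : M.toQuiverData.Composable y (c.u (j + 2)) :=
      comp_congr hjunc rfl ((c.headU (j + 2)).trans (head?_prefix ht ⟨r, hr⟩))
    have hsufU : c.u (j + 1) <:+ y :=
      (c.hu (j + 1)).minL y hy (hp1nz.of_infix hysuf.isInfix) hcompYU hzYU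
    obtain ⟨m, hm⟩ := hsufU
    have hmne : m ≠ [] := by
      rintro rfl
      rw [List.nil_append] at hm
      have hg : c.u (j + 1) ++ c.u (j + 2) ∈ M.F := (c.hu (j + 1)).concat_mem
      have hflt : f <:+: c.u (j + 1) ++ c.u (j + 2) :=
        ⟨[], r ++ c.B (j + 2), by
          rw [hf, hm, c.hu3 (j + 2), ← hr]; simp [List.append_assoc]⟩
      have heqf := M.F_min _ hg f hflt ⟨f, hfF, infix_rfl⟩
      have hlf := congrArg List.length heqf
      rw [hf, hm, c.hu3 (j + 2)] at hlf
      simp only [List.length_append] at hlf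
      have h1 : 0 < (c.B (j + 2)).length := List.length_pos_iff.mpr (c.hB (j + 2))
      have h2 : t.length ≤ (c.x (j + 2)).length := (show t <+: c.x (j + 2) from ⟨r, hr⟩).length_le
      omega
    have hzMS : M.IsZero ((m ++ c.x (j + 1)) ++ c.s (j + 2)) := by
      refine ⟨f, hfF, ⟨[], r, ?_⟩⟩
      rw [hf, ← hm, c.hu3 (j + 1), c.hlink (j + 1), ← hr]
      simp [List.append_assoc]
    have hfpre : m ++ c.x (j + 1) <+: f :=
      ⟨c.B (j + 1) ++ t, by rw [hf, ← hm, c.hu3 (j + 1)]; simp [List.append_assoc]⟩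
    have hMXnz : M.Nonzero (m ++ c.x (j + 1)) := by
      constructor
      · exact isPath_of_infix (M.F_path _ hfF) hfpre.isInfix
      · rintro ⟨f2, hf2, hinf2⟩
        have heqf := M.F_min f hfF (m ++ c.x (j + 1)) hfpre.isInfix ⟨f2, hf2, hinf2⟩
        have hlf := congrArg List.length heqf
        rw [hf, ← hm, c.hu3 (j + 1)] at hlf
        simp only [List.length_append] at hlf
        have h1 : 0 < (c.B (j + 1)).length := List.length_pos_iff.mpr (c.hB (j + 1))
        have h2 : 0 < t.length := List.length_pos_iff.mpr ht
        omega
    have hcompMS : M.toQuiverData.Composable (m ++ c.x (j + 1)) (c.s (j + 2)) :=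
      comp_congr (c.juncXB (j + 1))
        (last?_suffix (c.hx (j + 1)) (List.suffix_append m (c.x (j + 1))))
        (c.headS (j + 1))
    have hMXne : m ++ c.x (j + 1) ≠ [] := fun hh => hmne (List.append_eq_nil_iff.mp hh).1
    have hsufS := (c.hs (j + 1)).minL _ hMXne hMXnz hcompMS hzMS
    rw [c.hlink j] at hsufS
    obtain ⟨m', hm'⟩ := suffix_cancel hsufS
    have hWy : c.s (j + 1) ++ c.B (j + 1) <:+ y :=
      ⟨m', by rw [c.hWeq j, ← hm, ← hm']; simp [List.append_assoc]⟩
    exact hWy.trans hysuf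

end Interleave
end MonomialData

namespace MonomialData
open List
variable {V E : Type} {M : MonomialData V E}

/-- Deterministic iteration producing the interleaving blocks. -/
def iterXB (s u : ℕ → List E) (x0 B0 : List E) : ℕ → List E × List E
  | 0 => (x0, B0)
  | i + 1 =>
    let B := (iterXB s u x0 B0 i).2
    let x' := (s (i + 1)).drop B.length
    (x', (u (i + 1)).drop x'.length)

lemma no_overlap_of_H2
    (H2 : ∀ a b, M.IsPerfect a → M.IsPerfect b → a <+: b → a = b)
    {p q : List E} (hp : M.IsPerfect p) (hq : M.IsPerfect q) (hov : M.Overlap p q) :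
    False := by
  classical
  obtain ⟨n, s, hn, hs0, hsper, hspair⟩ := hp
  obtain ⟨m, u, hm, hu0, huper, hupair⟩ := hq
  have hps : ∀ i, M.IsPerfect (s i) := isPerfect_seq hn hsper hspair
  have hpu : ∀ i, M.IsPerfect (u i) := isPerfect_seq hm huper hupair
  obtain ⟨x0, A0, B0, hx0, hpeq, hqeq, hnz, hpq⟩ := hov
  by_cases hB0 : B0 = []
  · subst hB0
    rw [List.append_nil] at hqeq
    by_cases hA0 : A0 = []
    · exact (hpq (by rw [hpeq, hqeq, hA0, List.nil_append])).1 hA0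
    · exact caseC hspair hupair hps hpu H2 (i := 0) hA0
        (by rw [hs0, hu0, hpeq, hqeq])
  · -- the main interleaving case
    set x : ℕ → List E := fun i => (iterXB s u x0 B0 i).1 with hxdef
    set B : ℕ → List E := fun i => (iterXB s u x0 B0 i).2 with hBdef
    have hXrec : ∀ i, x (i + 1) = (s (i + 1)).drop (B i).length := fun i => rfl
    have hBrec : ∀ i, B (i + 1) = (u (i + 1)).drop (x (i + 1)).length := fun i => rfl
    have base : x 0 ≠ [] ∧ B 0 ≠ [] ∧ u 0 = x 0 ++ B 0 ∧ x 0 <:+ s 0 ∧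
        M.Nonzero (s 0 ++ B 0) := by
      refine ⟨hx0, hB0, by rw [hu0, hqeq]; rfl, ?_, ?_⟩
      · rw [hs0, hpeq]; exact List.suffix_append _ _
      · show M.Nonzero (s 0 ++ B0)
        rw [hs0, hpeq]; exact hnz
    have hstep : ∀ i, (x i ≠ [] ∧ B i ≠ [] ∧ u i = x i ++ B i ∧ x i <:+ s i ∧
          M.Nonzero (s i ++ B i)) →
        ((x (i + 1) ≠ [] ∧ B (i + 1) ≠ [] ∧ u (i + 1) = x (i + 1) ++ B (i + 1) ∧
          x (i + 1) <:+ s (i + 1) ∧ M.Nonzero (s (i + 1) ++ B (i + 1))) ∧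
          s (i + 1) = B i ++ x (i + 1)) := by
      intro i hi
      obtain ⟨h1, h2, h3, h4, h5⟩ := hi
      obtain ⟨x', B', ex, eB, hx'ne, hB'ne, hsx, hub, hnz'⟩ :=
        step hspair hupair hps hpu H2 h1 h2 h3 h4 h5
      have hxx : x (i + 1) = x' := by rw [hXrec i, ex]
      have hBB : B (i + 1) = B' := by rw [hBrec i, eB, hxx]
      refine ⟨⟨by rw [hxx]; exact hx'ne, by rw [hBB]; exact hB'ne,
        by rw [hxx, hBB]; exact hub, ?_, by rw [hBB]; exact hnz'⟩, by rw [hxx]; exact hsx⟩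
      rw [hxx]
      exact ⟨B i, hsx.symm⟩
    have hInv : ∀ i, (x i ≠ [] ∧ B i ≠ [] ∧ u i = x i ++ B i ∧ x i <:+ s i ∧
        M.Nonzero (s i ++ B i)) ∧ s (i + 1) = B i ++ x (i + 1) := by
      intro i
      induction i with
      | zero => exact ⟨base, (hstep 0 base).2⟩
      | succ k ih => exact ⟨(hstep k ih.1).1, (hstep (k + 1) (hstep k ih.1).1).2⟩
    set c : Interleave M := ⟨s, u, x, B, hspair, hupair, fun i => (hInv i).1.1,
      fun i => (hInv i).1.2.1, fun i => (hInv i).1.2.2.1, fun i => (hInv i).1.2.2.2.1,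
      fun i => (hInv i).1.2.2.2.2, fun i => (hInv i).2⟩ with hc
    -- pigeonhole: two congruent indices with equal block lengths
    set K := (Finset.range m).sup (fun r => (u r).length) with hK
    have hBle : ∀ t, (B t).length < K + 1 := by
      intro t
      have h1 : (B t).length ≤ (u t).length := (c.BsufU t).length_le
      have h2 : u t = u (t % m) := per_mod u m hm huper t
      have h3 : (u (t % m)).length ≤ K :=
        Finset.le_sup (f := fun r => (u r).length) (Finset.mem_range.mpr (Nat.mod_lt t hm))
      rw [h2] at h1
      omega
    obtain ⟨a, b, hab, hgab⟩ := Finite.exists_ne_map_eq_of_infinite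
      (fun t : ℕ => ((⟨t % n, Nat.mod_lt t hn⟩ : Fin n), (⟨t % m, Nat.mod_lt t hm⟩ : Fin m),
        (⟨(B t).length, hBle t⟩ : Fin (K + 1))))
    have hgn : a % n = b % n := congrArg (fun w => w.1.1) hgab
    have hgm : a % m = b % m := congrArg (fun w => w.2.1.1) hgab
    have hgB : (B a).length = (B b).length := congrArg (fun w => w.2.2.1) hgab
    -- wlog a < b
    obtain ⟨i, j, hij, hn', hm', hlb⟩ :
        ∃ i j, i < j ∧ i % n = j % n ∧ i % m = j % m ∧ (B i).length = (B j).length := by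
      rcases lt_or_gt_of_ne hab with h | h
      · exact ⟨a, b, h, hgn, hgm, hgB⟩
      · exact ⟨b, a, h, hgn.symm, hgm.symm, hgB.symm⟩
    have hBij : B i = B j := by
      have hu_ij : u i = u j := per_congr u m hm huper hm'
      exact sfx_eq_of_len (c.BsufU i) (show B j <:+ u i by rw [hu_ij]; exact c.BsufU j) hlb
    have hprop : ∀ k, B (i + k) = B (j + k) ∧ x (i + k + 1) = x (j + k + 1) := by
      intro k
      induction k with
      | zero =>
        refine ⟨hBij, ?_⟩
        have hs_eq : s (i + 1) = s (j + 1) :=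
          per_congr s n hn hsper (Nat.ModEq.add_right 1 hn')
        rw [hXrec i, hXrec j, hBij, hs_eq]
      | succ k ih =>
        show B (i + k + 1) = B (j + k + 1) ∧ x (i + k + 1 + 1) = x (j + k + 1 + 1)
        have hs_eq : s (i + k + 1 + 1) = s (j + k + 1 + 1) :=
          per_congr s n hn hsper (Nat.ModEq.add_right (k + 2) hn')
        have hu_eq : u (i + k + 1) = u (j + k + 1) :=
          per_congr u m hm huper (Nat.ModEq.add_right (k + 1) hm')
        have hB_eq : B (i + k + 1) = B (j + k + 1) := by
          rw [hBrec (i + k), hBrec (j + k), ih.2, hu_eq]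
        exact ⟨hB_eq, by rw [hXrec (i + k + 1), hXrec (j + k + 1), hB_eq, hs_eq]⟩
    set i0 := i + 1 with hi0
    set L := j - i with hL
    have hLpos : 0 < L := by omega
    have hnL : n ∣ L := (Nat.modEq_iff_dvd' hij.le).mp hn'
    have hmL : m ∣ L := (Nat.modEq_iff_dvd' hij.le).mp hm'
    have hshift : ∀ t, i0 ≤ t → x (t + L) = x t ∧ B (t + L) = B t := by
      intro t ht
      obtain ⟨k, rfl⟩ : ∃ k, t = i + k + 1 := ⟨t - i - 1, by omega⟩
      constructor
      · have := (hprop k).2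
        rw [show i + k + 1 + L = j + k + 1 from by omega]
        exact this.symm
      · have := (hprop (k + 1)).1
        rw [show i + k + 1 + L = j + (k + 1) from by omega,
          show i + k + 1 = i + (k + 1) from by omega]
        exact this.symm
    set P := 2 * L with hP
    set v : ℕ → List E := fun k => if k % 2 = 0 then x (i0 + k)
      else s (i0 + k) ++ B (i0 + k) with hv
    have hxPer : ∀ k, x (i0 + (k + P)) = x (i0 + k) := by
      intro k
      have h1 := (hshift (i0 + k + L) (by omega)).1
      have h2 := (hshift (i0 + k) (by omega)).1
      rw [show i0 + (k + P) = i0 + k + L + L from by omega]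
      rw [h1, h2]
    have hBPer : ∀ k, B (i0 + (k + P)) = B (i0 + k) := by
      intro k
      have h1 := (hshift (i0 + k + L) (by omega)).2
      have h2 := (hshift (i0 + k) (by omega)).2
      rw [show i0 + (k + P) = i0 + k + L + L from by omega]
      rw [h1, h2]
    have hsPer : ∀ k, s (i0 + (k + P)) = s (i0 + k) := by
      intro k
      refine per_congr s n hn hsper ?_
      show (i0 + (k + P)) % n = (i0 + k) % n
      have hdvd : n ∣ (L + L) := dvd_add hnL hnL
      have hme : (i0 + k) % n = (i0 + k + (L + L)) % n :=
        (Nat.modEq_iff_dvd' (Nat.le_add_right _ _)).mpr (by simpa using hdvd)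
      rw [show i0 + (k + P) = i0 + k + (L + L) from by omega]
      exact hme.symm
    have hvper : ∀ k, v (k + P) = v k := by
      intro k
      have e2 : (k + P) % 2 = k % 2 := by omega
      by_cases hk : k % 2 = 0
      · simp only [hv, e2, hk, if_pos]
        exact hxPer k
      · simp only [hv, e2, hk, if_neg, if_false]
        rw [hsPer k, hBPer k]
    have hvpair : ∀ k, M.PerfectPair (v k) (v (k + 1)) := by
      intro k
      by_cases hk : k % 2 = 0
      · have h1 : (k + 1) % 2 ≠ 0 := by omega
        have e1 : v k = x (i0 + k) := if_pos hk
        have e2 : v (k + 1) = s (i0 + k + 1) ++ B (i0 + k + 1) := if_neg h1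
        rw [e1, e2]
        exact c.lemA (i0 + k)
      · have h1 : (k + 1) % 2 = 0 := by omega
        have e1 : v k = s (i0 + k) ++ B (i0 + k) := if_neg hk
        have e2 : v (k + 1) = x (i0 + k + 1) := if_pos h1
        rw [e1, e2]
        have hk1 : 1 ≤ i0 + k := by omega
        obtain ⟨w, hw⟩ : ∃ w, i0 + k = w + 1 := ⟨i0 + k - 1, by omega⟩
        rw [hw]
        exact c.lemB w
    have hPpos : 0 < P := by omega
    have hperf_x : M.IsPerfect (x i0) := by
      refine ⟨P, v, hPpos, ?_, hvper, hvpair⟩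
      show (if 0 % 2 = 0 then x (i0 + 0) else _) = x i0
      simp
    have heq := H2 _ _ hperf_x (hpu i0) (c.xpreU i0)
    have hlen := congrArg List.length heq
    rw [(hInv i0).1.2.2.1, List.length_append] at hlen
    have hBpos : 0 < (B i0).length := List.length_pos_iff.mpr ((hInv i0).1.2.1)
    omega

end MonomialData

namespace MonomialData
variable {V E : Type} {M : MonomialData V E}

lemma overlap_of_strict_prefix {p q : List E} (hp : M.IsPerfect p) (hq : M.IsPerfect q)
    (hpre : p <+: q) (hne : p ≠ q) : M.Overlap p q := by
  obtain ⟨t, ht⟩ := hpre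
  exact ⟨p, [], t, hp.ne_nil, (List.nil_append p).symm, ht.symm,
    by simpa [ht] using hq.nonzero, fun h => absurd h hne⟩

end MonomialData

theorem no_overlap_tfae' {V E : Type} (M : MonomialData V E) :
    ((¬ ∃ p q, M.IsPerfect p ∧ M.IsPerfect q ∧ M.Overlap p q) ↔
      (∀ p, M.IsPerfect p → M.Elementary p ∧ M.CoElementary p)) ∧
    ((∀ p, M.IsPerfect p → M.Elementary p ∧ M.CoElementary p) ↔
      (∀ p, M.IsPerfect p →
        (¬ ∃ q, M.HasseArrowPrec p q) ∧ (¬ ∃ q, M.HasseArrowPrec q p))) := by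
  classical
  constructor
  · constructor
    · intro h1 p hp
      refine ⟨⟨hp, ?_⟩, ⟨hp, ?_⟩⟩
      · rintro ⟨q, hq, hpre, hne⟩
        exact h1 ⟨p, q, hp, hq, MonomialData.overlap_of_strict_prefix hp hq hpre hne⟩
      · rintro ⟨q, hq, hpre, hne⟩
        exact h1 ⟨q, p, hq, hp, MonomialData.overlap_of_strict_prefix hq hp hpre hne⟩
    · intro h2
      rintro ⟨p, q, hp, hq, hov⟩
      refine MonomialData.no_overlap_of_H2 ?_ hp hq hov
      intro a b ha hb hpre
      by_contra hne
      exact (h2 a ha).1.2 ⟨b, hb, hpre, hne⟩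
  · constructor
    · intro h2 p hp
      constructor
      · rintro ⟨q, hq1⟩
        exact (h2 p hp).2.2 ⟨q, hq1.1, hq1.2.2.1, hq1.2.2.2.1⟩
      · rintro ⟨q, hq1⟩
        exact (h2 p hp).1.2 ⟨q, hq1.2.1, hq1.2.2.1, hq1.2.2.2.1⟩
    · intro h3 p hp
      constructor
      · refine ⟨hp, ?_⟩
        rintro ⟨q, hq, hpre, hne⟩
        have hex : ∃ k, ∃ r, M.IsPerfect r ∧ p <+: r ∧ p ≠ r ∧ r.length = k :=
          ⟨q.length, q, hq, hpre, hne, rfl⟩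
        obtain ⟨r, hr, hrpre, hrne, hrlen⟩ := Nat.find_spec hex
        refine (h3 p hp).2 ⟨r, hp, hr, hrpre, hrne, ?_⟩
        rintro ⟨w, hw, hpw, hpwne, hwr, hwrne⟩
        have hwlt : w.length < r.length := by
          rcases hwr.length_le.lt_or_eq with h | h
          · exact h
          · exact absurd (hwr.eq_of_length h) hwrne
        exact Nat.find_min hex (by omega) ⟨w, hw, hpw, hpwne, rfl⟩
      · refine ⟨hp, ?_⟩
        rintro ⟨q, hq, hpre, hne⟩
        set Q : ℕ → Prop := fun k => ∃ r, M.IsPerfect r ∧ r <+: p ∧ r ≠ p ∧ r.length = k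
          with hQ
        have hQq : Q q.length := ⟨q, hq, hpre, hne, rfl⟩
        have hqle : q.length ≤ p.length := hpre.length_le
        obtain ⟨r, hr, hrpre, hrne, hrlen⟩ := Nat.findGreatest_spec hqle hQq
        refine (h3 p hp).1 ⟨r, hr, hp, hrpre, hrne, ?_⟩
        rintro ⟨w, hw, hrw, hrwne, hwp, hwpne⟩
        have h1 : w.length ≤ Nat.findGreatest Q p.length :=
          Nat.le_findGreatest hwp.length_le ⟨w, hw, hwp, hwpne, rfl⟩
        have h2 : r.length < w.length := by
          rcases hrw.length_le.lt_or_eq with h | h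
          · exact h
          · exact absurd (hrw.eq_of_length h) hrwne
        omega

/-- equivalent are: (1) no overlap between any two perfect
paths; (2) every perfect path is both elementary and co-elementary;
(3) every perfect path is both a sink and a source in the Hasse quiver of
`(ℙ_Λ, ⪯)`. -/
theorem no_overlap_tfae {V E : Type} (M : MonomialData V E) :
    ((¬ ∃ p q, M.IsPerfect p ∧ M.IsPerfect q ∧ M.Overlap p q) ↔
      (∀ p, M.IsPerfect p → M.Elementary p ∧ M.CoElementary p)) ∧
    ((∀ p, M.IsPerfect p → M.Elementary p ∧ M.CoElementary p) ↔
      (∀ p, M.IsPerfect p →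
        (¬ ∃ q, M.HasseArrowPrec p q) ∧ (¬ ∃ q, M.HasseArrowPrec q p))) := by
  exact no_overlap_tfae' M
end

section
/- Let Λ = KQ/I be a monomial algebra and c = a_1 ⋯ a_n an underlying cycle, where each a_i is an arrow. Then the following are equivalent: (1) each arrow a_i is a perfect path; (2) the number |c| of co-elementary factors of c equals the length l(c) = n of c; (3) both (a) every nonzero nontrivial subpath p of a power c^m of c such that pq ∈ 𝔽 for some path q is perfect, and (b) a_i a_{i+1} ⋯ a_{i+m_c} ∈ 𝔽 for all 1 ≤ i ≤ n (indices mod n). -/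
namespace CSZ

variable {E : Type}

/-- the path segment `a i, a (i+1), ..., a (i+d-1)`. -/
def seg (a : ℕ → E) (i d : ℕ) : List E := (List.range d).map fun t => a (i + t)

@[simp] lemma seg_length (a : ℕ → E) (i d : ℕ) : (seg a i d).length = d := by
  simp [seg]

@[simp] lemma seg_zero (a : ℕ → E) (i : ℕ) : seg a i 0 = [] := rfl

lemma seg_succ (a : ℕ → E) (i d : ℕ) : seg a i (d + 1) = a i :: seg a (i + 1) d := by
  simp only [seg, List.range_succ_eq_map, List.map_cons, List.map_map, Nat.add_zero]
  congr 1
  apply List.map_congr_left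
  intro t _
  simp only [Function.comp_apply]
  congr 1
  omega

@[simp] lemma seg_one (a : ℕ → E) (i : ℕ) : seg a i 1 = [a i] := by
  simp [seg_succ]

lemma seg_append (a : ℕ → E) (i d e : ℕ) :
    seg a i d ++ seg a (i + d) e = seg a i (d + e) := by
  simp only [seg, List.range_add, List.map_append, List.map_map]
  congr 1
  apply List.map_congr_left
  intro t _
  simp only [Function.comp]
  congr 1
  omega

lemma seg_drop (a : ℕ → E) (i d t : ℕ) : (seg a i d).drop t = seg a (i + t) (d - t) := by
  rcases le_or_gt t d with h | h
  · have := seg_append a i t (d - t)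
    rw [show t + (d - t) = d by omega] at this
    rw [← this, List.drop_append]
    simp
  · rw [List.drop_of_length_le (by simp; omega), show d - t = 0 by omega, seg_zero]

lemma seg_take (a : ℕ → E) (i d t : ℕ) : (seg a i d).take t = seg a i (min t d) := by
  rcases le_or_gt t d with h | h
  · have := seg_append a i t (d - t)
    rw [show t + (d - t) = d by omega] at this
    rw [← this, List.take_append]
    simp [show min t d = t by omega]
  · rw [List.take_of_length_le (by simp; omega), show min t d = d by omega]

lemma seg_ne_nil (a : ℕ → E) (i d : ℕ) (hd : 0 < d) : seg a i d ≠ [] := by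
  intro h
  have := congrArg List.length h
  simp at this
  omega

lemma eq_seg_of_prefix {a : ℕ → E} {i d : ℕ} {x : List E} (h : x <+: seg a i d) :
    x = seg a i x.length ∧ x.length ≤ d := by
  obtain ⟨w, hw⟩ := h
  have hlen : x.length + w.length = d := by
    have := congrArg List.length hw; simpa using this
  have hx : x = (seg a i d).take x.length := by rw [← hw, List.take_left]
  rw [seg_take] at hx
  constructor
  · conv_lhs => rw [hx]
    congr 1
    omega
  · omega

lemma eq_seg_of_suffix {a : ℕ → E} {i d : ℕ} {x : List E} (h : x <:+ seg a i d) :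
    x = seg a (i + (d - x.length)) x.length ∧ x.length ≤ d := by
  obtain ⟨w, hw⟩ := h
  have hlen : w.length + x.length = d := by
    have := congrArg List.length hw; simpa using this
  have hx : x = (seg a i d).drop w.length := by rw [← hw, List.drop_left]
  rw [seg_drop] at hx
  constructor
  · conv_lhs => rw [hx]
    congr 1 <;> omega
  · omega

lemma eq_seg_of_infix {a : ℕ → E} {i d : ℕ} {x : List E} (h : x <:+: seg a i d) :
    ∃ t, t + x.length ≤ d ∧ x = seg a (i + t) x.length := by
  obtain ⟨u, hu, hx⟩ := List.infix_iff_prefix_suffix.1 h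
  obtain ⟨hx1, hx2⟩ := eq_seg_of_suffix hx
  rw [hx1] at hu
  obtain ⟨hy1, hy2⟩ := eq_seg_of_prefix hu
  exact ⟨d - u.length, by omega, hy1⟩

lemma seg_infix_of_le {a : ℕ → E} {i d j D : ℕ} (h1 : j ≤ i) (h2 : i + d ≤ j + D) :
    seg a i d <:+: seg a j D := by
  have e1 := seg_append a j (i - j) d
  rw [show j + (i - j) = i by omega] at e1
  have e2 := seg_append a j (i - j + d) (D - (i - j + d))
  rw [show i - j + d + (D - (i - j + d)) = D by omega] at e2
  rw [← e2, ← show i - j + d = (i - j) + d from rfl, ← e1]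
  rw [show j + (i - j + d) = i + d by omega]
  exact ⟨seg a j (i - j), seg a (i + d) (D - (i - j + d)), by simp⟩

lemma seg_head (a : ℕ → E) (i d : ℕ) (hd : 0 < d) : (seg a i d).head? = some (a i) := by
  obtain ⟨e, rfl⟩ : ∃ e, d = e + 1 := ⟨d - 1, by omega⟩
  rw [seg_succ]; rfl

lemma seg_getLast (a : ℕ → E) (i d : ℕ) (hd : 0 < d) :
    (seg a i d).getLast? = some (a (i + d - 1)) := by
  have := seg_append a i (d - 1) 1
  rw [show d - 1 + 1 = d by omega] at this
  rw [← this, seg_one, List.getLast?_concat]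
  congr 2
  omega

section periodic

variable {a : ℕ → E} {n : ℕ}

lemma seg_period (hper : ∀ k, a (k + n) = a k) (i d : ℕ) : seg a (i + n) d = seg a i d := by
  apply List.map_congr_left
  intro t _
  have := hper (i + t)
  rw [show i + n + t = i + t + n by omega, this]

lemma seg_period' (hper : ∀ k, a (k + n) = a k) (i d C : ℕ) : seg a (i + C * n) d = seg a i d := by
  induction C with
  | zero => simp
  | succ C ih =>
    rw [show i + (C + 1) * n = i + C * n + n by ring_nf, seg_period hper, ih]

lemma a_period' (hper : ∀ k, a (k + n) = a k) (k C : ℕ) : a (k + C * n) = a k := by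
  induction C with
  | zero => simp
  | succ C ih => rw [show k + (C + 1) * n = k + C * n + n by ring_nf, hper, ih]

end periodic

end CSZ

namespace CSZ

open MonomialData

variable {V E : Type} {M : MonomialData V E}

lemma isZero_mono {l l' : List E} (h : M.IsZero l) (h2 : l <:+: l') : M.IsZero l' := by
  obtain ⟨f, hf, hfl⟩ := h
  exact ⟨f, hf, hfl.trans h2⟩

lemma nonzero_of_infix {l l' : List E} (h : M.Nonzero l) (h2 : l' <:+: l) : M.Nonzero l' :=
  ⟨h.1.infix h2, fun hz => h.2 (isZero_mono hz h2)⟩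

lemma F_nonzero_of_infix {f l : List E} (hf : f ∈ M.F) (h : l <:+: f)
    (hl : l.length < f.length) : M.Nonzero l := by
  refine ⟨(M.F_path f hf).infix h, fun hz => ?_⟩
  have := M.F_min f hf l h hz
  rw [this] at hl
  omega

lemma F_prefix_eq {f g : List E} (hf : f ∈ M.F) (hg : g ∈ M.F) (h : f <+: g) : f = g :=
  M.F_min g hg f h.isInfix ⟨f, hf, List.infix_refl f⟩

lemma seg_F_unique {a : ℕ → E} {i d₁ d₂ : ℕ} (h1 : seg a i d₁ ∈ M.F)
    (h2 : seg a i d₂ ∈ M.F) : d₁ = d₂ := by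
  have key : ∀ d₁ d₂, d₁ ≤ d₂ → seg a i d₁ ∈ M.F → seg a i d₂ ∈ M.F → d₁ = d₂ := by
    intro d₁ d₂ h hh1 hh2
    have hp : seg a i d₁ <+: seg a i d₂ := by
      have := seg_append a i d₁ (d₂ - d₁)
      rw [show d₁ + (d₂ - d₁) = d₂ by omega] at this
      exact ⟨_, this⟩
    have := F_prefix_eq hh1 hh2 hp
    have := congrArg List.length this
    simpa using this
  rcases le_or_gt d₁ d₂ with h | h
  · exact key _ _ h h1 h2
  · exact (key _ _ h.le h2 h1).symm

/-- Straddle decomposition of an infix across a concatenation. -/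
lemma straddle {f p q : List E} (hinf : f <:+: p ++ q) (hfp : ¬ f <:+: p) (hfq : ¬ f <:+: q) :
    ∃ x y, x ≠ [] ∧ y ≠ [] ∧ x <:+ p ∧ y <+: q ∧ f = x ++ y := by
  obtain ⟨s, t, hst⟩ := hinf
  have hst' : s ++ (f ++ t) = p ++ q := by rw [← hst]; simp
  have hqne : q ≠ [] := by
    rintro rfl
    exact hfp (by rw [List.append_nil] at hst; exact ⟨s, t, hst⟩)
  have hsp : s.length < p.length := by
    by_contra hcon
    push_neg at hcon
    apply hfq
    have hqe : s.drop p.length ++ (f ++ t) = q := by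
      have h2 := congrArg (List.drop p.length) hst'
      rwa [List.drop_append, Nat.sub_eq_zero_of_le hcon, List.drop_zero,
        List.drop_append, List.drop_of_length_le le_rfl, Nat.sub_self,
        List.drop_zero, List.nil_append] at h2
    exact ⟨s.drop p.length, t, by rw [List.append_assoc]; exact hqe⟩
  have hpf : p.length < s.length + f.length := by
    by_contra hcon
    push_neg at hcon
    apply hfp
    have hpe : s ++ (f ++ t.take (p.length - s.length - f.length)) = p := by
      have h2 := congrArg (List.take p.length) hst'
      rwa [List.take_append, List.take_of_length_le (by omega),
        List.take_append, List.take_of_length_le (by omega),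
        List.take_append, List.take_of_length_le le_rfl, Nat.sub_self,
        List.take_zero, List.append_nil] at h2
    exact ⟨s, t.take (p.length - s.length - f.length), by rw [List.append_assoc]; exact hpe⟩
  refine ⟨p.drop s.length, q.take (s.length + f.length - p.length), ?_, ?_, ?_, ?_, ?_⟩
  · intro h
    have := congrArg List.length h
    simp only [List.length_drop, List.length_nil] at this
    omega
  · intro h
    have hlen := congrArg List.length h
    simp only [List.length_take, List.length_nil] at hlen
    have hq1 : 0 < q.length := List.length_pos_iff.2 hqne
    omega
  · exact List.drop_suffix _ _
  · exact List.take_prefix _ _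
  · have h2 := congrArg (fun l => (l.drop s.length).take f.length) hst'
    rw [List.drop_left, List.take_left, List.drop_append,
      Nat.sub_eq_zero_of_le hsp.le, List.drop_zero,
      List.take_append,
      List.take_of_length_le (by simp [List.length_drop]; omega)] at h2
    rw [List.length_drop] at h2
    rw [show s.length + f.length - p.length = f.length - (p.length - s.length) by omega]
    exact h2

lemma pair_concat_mem_F {p q : List E} (h : M.PerfectPair p q) : p ++ q ∈ M.F := by
  obtain ⟨hp, hq, hpnz, hqnz, hcomp, hzero, hrmin, hlmin⟩ := h
  obtain ⟨f, hfF, hfinf⟩ := hzero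
  have hfp : ¬ f <:+: p := fun h => hpnz.2 ⟨f, hfF, h⟩
  have hfq : ¬ f <:+: q := fun h => hqnz.2 ⟨f, hfF, h⟩
  obtain ⟨x, y, hxne, hyne, hxs, hyp, hfxy⟩ := straddle hfinf hfp hfq
  -- x is a nonzero suffix of p, y a nonzero prefix of q
  have hxnz : M.Nonzero x := nonzero_of_infix hpnz hxs.isInfix
  have hynz : M.Nonzero y := nonzero_of_infix hqnz hyp.isInfix
  have hcompx : M.toQuiverData.Composable x q := by
    intro u hu v hv
    apply hcomp u _ v hv
    obtain ⟨w, hw⟩ := hxs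
    rw [← hw, List.getLast?_append_of_ne_nil _ hxne]
    exact hu
  have hzx : M.IsZero (x ++ q) := by
    refine ⟨f, hfF, ?_⟩
    rw [hfxy]
    obtain ⟨w, hw⟩ := hyp
    exact (List.prefix_append_right_inj x |>.2 ⟨w, hw⟩).isInfix
  have hxp : x = p := by
    have := hlmin x hxne hxnz hcompx hzx
    exact hxs.sublist.antisymm this.sublist
  subst hxp
  have hcompy : M.toQuiverData.Composable x y := by
    intro u hu v hv
    apply hcomp u hu v
    obtain ⟨w, hw⟩ := hyp
    rw [← hw, List.head?_append_of_ne_nil _ hyne]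
    exact hv
  have hzy : M.IsZero (x ++ y) := ⟨f, hfF, by rw [hfxy]⟩
  have hyq : y = q := by
    have := hrmin y hyne hynz hcompy hzy
    exact hyp.sublist.antisymm this.sublist
  rw [← hyq, ← hfxy]
  exact hfF
  
end CSZ

namespace CSZ

open MonomialData

variable {V E : Type} {M : MonomialData V E}

lemma perfect_of_chain {s : ℕ → List E} {n : ℕ} (hn : 0 < n)
    (hper : ∀ i, s (i + n) = s i) (hpairs : ∀ i, M.PerfectPair (s i) (s (i + 1))) (i : ℕ) :
    M.IsPerfect (s i) :=
  ⟨n, fun j => s (j + i), hn, by simp, fun j => by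
      simp only [show j + n + i = j + i + n by omega, hper],
    fun j => by simpa [show j + 1 + i = j + i + 1 by omega] using hpairs (j + i)⟩

lemma exists_pair_right {p : List E} (h : M.IsPerfect p) :
    ∃ q, M.PerfectPair p q ∧ M.IsPerfect q := by
  obtain ⟨n, s, hn, hs0, hper, hpairs⟩ := h
  exact ⟨s 1, hs0 ▸ hpairs 0, perfect_of_chain hn hper hpairs 1⟩

lemma exists_pair_left {p : List E} (h : M.IsPerfect p) :
    ∃ q, M.PerfectPair q p ∧ M.IsPerfect q := by
  obtain ⟨n, s, hn, hs0, hper, hpairs⟩ := h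
  refine ⟨s (n - 1), ?_, perfect_of_chain hn hper hpairs (n - 1)⟩
  have h2 := hpairs (n - 1)
  rw [show n - 1 + 1 = n by omega] at h2
  rw [← hs0, ← hper 0]
  simpa using h2

lemma IsPerfect_ne_nil {p : List E} (h : M.IsPerfect p) : p ≠ [] :=
  (exists_pair_right h).choose_spec.1.1

lemma IsPerfect_nonzero {p : List E} (h : M.IsPerfect p) : M.Nonzero p :=
  (exists_pair_right h).choose_spec.1.2.2.1

lemma pair_right_unique {p q q' : List E} (h : M.PerfectPair p q) (h' : M.PerfectPair p q') :
    q = q' := by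
  have h1 := h.2.2.2.2.2.2.1 q' h'.2.1 h'.2.2.2.1 h'.2.2.2.2.1 h'.2.2.2.2.2.1
  have h2 := h'.2.2.2.2.2.2.1 q h.2.1 h.2.2.2.1 h.2.2.2.2.1 h.2.2.2.2.2.1
  exact h1.sublist.antisymm h2.sublist

lemma pair_left_unique {p p' q : List E} (h : M.PerfectPair p q) (h' : M.PerfectPair p' q) :
    p = p' := by
  have h1 := h'.2.2.2.2.2.2.2 p h.1 h.2.2.1 h.2.2.2.2.1 h.2.2.2.2.2.1
  have h2 := h.2.2.2.2.2.2.2 p' h'.1 h'.2.2.1 h'.2.2.2.2.1 h'.2.2.2.2.2.1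
  exact h2.sublist.antisymm h1.sublist

end CSZ

namespace CSZ

open MonomialData

variable {V E : Type} {M : MonomialData V E}

/-- The main structure theorem under hypothesis (1): all arrows of the underlying
cycle are perfect. -/
lemma forward (n : ℕ) (hn : 0 < n) (a : ℕ → E) (hper : ∀ k, a (k + n) = a k)
    (hc : ∃ p, M.IsUnderlyingCycleOf ((List.range n).map fun k => a (k + 1)) p)
    (h1 : ∀ k, M.IsPerfect [a k]) :
    ∃ m', 1 ≤ m' ∧ (∀ i, 1 ≤ i → seg a i (m' + 1) ∈ M.F) ∧
      (∀ i d, 1 ≤ i → 1 ≤ d → d ≤ m' → M.IsPerfect (seg a i d)) ∧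
      (∀ p, M.IsPerfect p → [a 1] <+: p → ∃ j, 1 ≤ j ∧ j ≤ m' ∧ p = seg a 1 j) ∧
      (∀ i d, 1 ≤ i → M.Nonzero (seg a i d) → d ≤ m') := by
  classical
  obtain ⟨p₀, N, s, hN, hs0, hsper, hpairs, ⟨l, hl, hflat⟩, hmin⟩ := hc
  clear hmin hs0
  -- basic facts about the cycle as a segment
  have hceq : ((List.range n).map fun k => a (k + 1)) = seg a 1 n := by
    apply List.map_congr_left
    intro t _
    congr 1
    omega
  have hrep : ∀ L : ℕ, (List.replicate L (seg a 1 n)).flatten = seg a 1 (L * n) := by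
    intro L
    induction L with
    | zero => simp
    | succ L ih =>
      rw [List.replicate_succ, List.flatten_cons, ih, ← seg_period hper 1 (L * n),
        show 1 + n = 1 + n from rfl, seg_append]
      congr 1
      ring
  rw [hceq, hrep] at hflat
  -- tiles are nonempty and nonzero
  have htne : ∀ j, s j ≠ [] := fun j => (hpairs j).1
  have htnz : ∀ j, M.Nonzero (s j) := fun j => (hpairs j).2.2.1
  -- the cut positions
  set P : ℕ → ℕ := fun j => (((List.range j).map s).flatten).length with hP
  have hP0 : P 0 = 0 := by simp [hP]
  have hPsucc : ∀ j, P (j + 1) = P j + (s j).length := by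
    intro j
    simp [hP, List.range_succ]
  have hPmono : ∀ j k, j ≤ k → P j ≤ P k := by
    intro j k hjk
    induction k with
    | zero => simp_all
    | succ k ih =>
      rcases Nat.lt_or_ge j (k + 1) with h | h
      · have := ih (by omega)
        rw [hPsucc]
        omega
      · have : j = k + 1 := by omega
        rw [this]
  have hPN : P N = l * n := by
    have := congrArg List.length hflat
    simpa [hP] using this
  have hPlt : ∀ j, P j < P (j + 1) := by
    intro j
    rw [hPsucc]
    have := htne j
    have : 0 < (s j).length := List.length_pos_iff.2 this
    omega
  have hPunb : ∀ j, j ≤ P j := by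
    intro j
    induction j with
    | zero => omega
    | succ j ih => have := hPlt j; omega
  -- tile location: each tile is the corresponding segment of the cycle power
  have T3 : ∀ j, j < N → s j = seg a (P j + 1) (s j).length := by
    intro j hj
    have hsplit : ((List.range N).map s).flatten =
        ((List.range j).map s).flatten ++ (s j ++ ((List.range (N - (j+1))).map
          (fun t => s (j + 1 + t))).flatten) := by
      obtain ⟨K, hK⟩ : ∃ K, N = j + (1 + K) := ⟨N - (j+1), by omega⟩
      rw [show N - (j + 1) = K by omega, hK]
      rw [List.range_add, List.map_append, List.flatten_append]
      congr 1
      rw [List.map_map, List.range_add, List.map_append, List.flatten_append,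
        show List.range 1 = [0] from rfl]
      simp only [List.map_cons, List.map_nil, List.flatten_cons, List.flatten_nil,
        Function.comp_apply, Nat.add_zero, List.append_nil, List.map_map]
      congr 1
      congr 1
      apply List.map_congr_left
      intro t _
      simp only [Function.comp_apply]
      congr 1
      omega
    rw [hflat] at hsplit
    have hmid : s j = ((seg a 1 (l * n)).drop (((List.range j).map s).flatten).length).take
        (s j).length := by
      rw [hsplit, List.drop_left, List.take_left]
    have hPj : (((List.range j).map s).flatten).length = P j := rfl
    rw [hPj, seg_drop, seg_take] at hmid
    have hle : P (j + 1) ≤ l * n := by rw [← hPN]; exact hPmono _ _ (by omega)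
    have hps := hPsucc j
    rw [show (1 : ℕ) + P j = P j + 1 by omega,
      show min (s j).length (l * n - P j) = (s j).length by omega] at hmid
    exact hmid
  have T4 : ∀ j, P (j + N) = P j + l * n := by
    intro j
    induction j with
    | zero => simpa [hP0] using hPN
    | succ j ih =>
      rw [show j + 1 + N = (j + N) + 1 by omega, hPsucc, ih, hPsucc, hsper]
      omega
  have T5 : ∀ j, s j = seg a (P j + 1) (s j).length := by
    intro j
    obtain ⟨k, r, hr, rfl⟩ : ∃ k r, r < N ∧ j = r + k * N :=
      ⟨j / N, j % N, Nat.mod_lt _ hN, by rw [Nat.mod_add_div' j N]⟩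
    induction k with
    | zero => simpa using T3 r hr
    | succ k ih =>
      have hs' : s (r + (k + 1) * N) = s (r + k * N) := by
        rw [show r + (k + 1) * N = (r + k * N) + N by ring]
        exact hsper _
      have hp' : P (r + (k + 1) * N) = P (r + k * N) + l * n := by
        rw [show r + (k + 1) * N = (r + k * N) + N by ring]
        exact T4 _
      rw [hs', hp', ih, show P (r + k * N) + l * n + 1 = P (r + k * N) + 1 + l * n by omega,
        seg_period' hper, seg_length]
  -- consecutive tiles concatenate to relations
  have T6 : ∀ j, seg a (P j + 1) ((s j).length + (s (j + 1)).length) ∈ M.F := by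
    intro j
    have hmem := pair_concat_mem_F (hpairs j)
    rwa [T5 j, T5 (j + 1), hPsucc j, show P j + (s j).length + 1 = P j + 1 + (s j).length
      by omega, seg_append] at hmem
  have T7 : ∀ x : ℕ, ∃ j, P j ≤ x ∧ x < P (j + 1) := by
    intro x
    induction x with
    | zero => exact ⟨0, by omega, by have := hPlt 0; omega⟩
    | succ x ih =>
      obtain ⟨j, hj1, hj2⟩ := ih
      rcases Nat.lt_or_ge (x + 1) (P (j + 1)) with h | h
      · exact ⟨j, by omega, h⟩
      · exact ⟨j + 1, by omega, by have := hPlt (j + 1); omega⟩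
  -- adjacency of consecutive arrows
  have hadj : ∀ k, 1 ≤ k → M.tgt (a k) = M.src (a (k + 1)) := by
    intro k hk
    obtain ⟨j, hj1, hj2⟩ := T7 (k - 1)
    have hmem := T6 j
    have hpath := M.F_path _ hmem
    have hinf : seg a k 2 <:+: seg a (P j + 1) ((s j).length + (s (j + 1)).length) := by
      apply seg_infix_of_le (by omega)
      have e1 := hPsucc j
      have e2 := hPsucc (j + 1)
      have e3 := hPlt (j + 1)
      omega
    have h2 := hpath.infix hinf
    rw [show (2 : ℕ) = 1 + 1 from rfl, seg_succ, seg_one] at h2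
    exact (List.isChain_cons_cons.1 h2).1
  -- segments are paths
  have path_seg : ∀ d i, 1 ≤ i → M.IsPath (seg a i d) := by
    intro d
    induction d with
    | zero => intro i _; exact List.isChain_nil
    | succ d ih =>
      intro i hi
      rw [seg_succ]
      apply List.isChain_cons.2
      refine ⟨?_, ih (i + 1) (by omega)⟩
      intro y hy
      cases d with
      | zero => simp at hy
      | succ d =>
        rw [seg_head a (i + 1) (d + 1) (by omega)] at hy
        cases hy
        exact hadj i hi
  -- choose perfect-pair partners for each arrow
  have hq0 : ∀ k : ℕ, ∃ qp : List E × List E,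
      M.PerfectPair [a k] qp.1 ∧ M.IsPerfect qp.1 ∧
      M.PerfectPair qp.2 [a k] ∧ M.IsPerfect qp.2 := by
    intro k
    obtain ⟨q, hq1, hq2⟩ := exists_pair_right (h1 k)
    obtain ⟨p, hp1, hp2⟩ := exists_pair_left (h1 k)
    exact ⟨(q, p), hq1, hq2, hp1, hp2⟩
  choose Q hQ1 hQ2 hQ3 hQ4 using hq0
  set q : ℕ → List E := fun k => (Q k).1 with hqdef
  set pL : ℕ → List E := fun k => (Q k).2 with hpLdef
  set μ : ℕ → ℕ := fun k => (q k).length with hμdef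
  have hμpos : ∀ k, 1 ≤ μ k := by
    intro k
    have := (hQ1 k).2.1
    have := List.length_pos_iff.2 this
    exact this
  have hqper : ∀ k, q (k + n) = q k := by
    intro k
    have h1' := hQ1 (k + n)
    rw [hper k] at h1'
    exact pair_right_unique h1' (hQ1 k)
  have hμper : ∀ k, μ (k + n) = μ k := fun k => by simp [hμdef, hqper k]
  -- anchoring: any relation along the cycle starting at `i` is `[a i] ++ q i`
  have S1b : ∀ i d, 1 ≤ i → seg a i d ∈ M.F → q i = seg a (i + 1) (μ i) ∧ d = μ i + 1 := by
    intro i d hi hFi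
    have hd2 : 2 ≤ d := by
      have := M.F_len _ hFi
      simpa using this
    have hsplit : seg a i d = [a i] ++ seg a (i + 1) (d - 1) := by
      rw [show d = (d - 1) + 1 by omega, seg_succ]
      rfl
    have htailne : seg a (i + 1) (d - 1) ≠ [] := seg_ne_nil _ _ _ (by omega)
    have htailnz : M.Nonzero (seg a (i + 1) (d - 1)) := by
      apply F_nonzero_of_infix hFi
      · rw [hsplit]
        exact (List.suffix_append _ _).isInfix
      · simp
        omega
    have hcompa : M.toQuiverData.Composable [a i] (seg a (i + 1) (d - 1)) := by
      intro u hu v hv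
      rw [seg_head a (i + 1) (d - 1) (by omega)] at hv
      cases hv
      cases hu
      exact hadj i hi
    have hz : M.IsZero ([a i] ++ seg a (i + 1) (d - 1)) := ⟨_, hFi, by rw [← hsplit]⟩
    have hpref := (hQ1 i).2.2.2.2.2.2.1 _ htailne htailnz hcompa hz
    obtain ⟨hq1, hq2⟩ := eq_seg_of_prefix hpref
    have hqi : q i = seg a (i + 1) (μ i) := hq1
    refine ⟨hqi, ?_⟩
    have hmem2 : seg a i (μ i + 1) ∈ M.F := by
      have h0 := pair_concat_mem_F (hQ1 i)
      have h0' : [a i] ++ q i ∈ M.F := h0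
      rwa [hqi, show ([a i] : List E) = seg a i 1 by simp, seg_append,
        show (1 : ℕ) + μ i = μ i + 1 by omega] at h0'
    exact seg_F_unique hFi hmem2
  -- existence of zero powers along the cycle
  obtain ⟨N₀, hN₀⟩ := M.admissible
  have hzex : ∀ i, 1 ≤ i → ∃ K, M.IsZero (seg a i K) := by
    intro i hi
    exact ⟨N₀, hN₀ _ (path_seg N₀ i hi) (by simp)⟩
  -- interval propagation
  have hstep : ∀ i, 1 ≤ i → (∃ d, seg a i d ∈ M.F) → ∃ d, seg a (i + 1) d ∈ M.F := by
    intro i hi ⟨d, hFi⟩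
    obtain ⟨hqi, rfl⟩ := S1b i d hi hFi
    have hμi := hμpos i
    -- K = minimal length of a zero path starting at i+1
    have hKex := hzex (i + 1) (by omega)
    obtain ⟨K, hK, hKmin⟩ : ∃ K, M.IsZero (seg a (i + 1) K) ∧
        ∀ K', K' < K → ¬ M.IsZero (seg a (i + 1) K') :=
      ⟨Nat.find hKex, Nat.find_spec hKex, fun K' h => Nat.find_min hKex h⟩
    have hqnz : M.Nonzero (q i) := (hQ1 i).2.2.2.1
    have hKgt : μ i + 1 ≤ K := by
      by_contra hcon
      push_neg at hcon
      apply hqnz.2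
      rw [hqi]
      exact isZero_mono hK (seg_infix_of_le (by omega) (by omega))
    -- the candidate continuation
    by_cases hq'z : M.IsZero (seg a (i + 1 + μ i) (K - μ i))
    · -- impossible: it would yield a relation interval beyond a tile containing the
      -- interval at i, contradicting nonzeroness of tiles
      exfalso
      obtain ⟨f, hfF, hfinf⟩ := hq'z
      obtain ⟨t, htle, hft⟩ := eq_seg_of_infix hfinf
      -- the relation f ends exactly at position i + K
      have hfend : μ i + t + f.length = K := by
        have hle1 : μ i + t + f.length ≤ K := by omega
        by_contra hcon
        have hlt : μ i + t + f.length < K := by omega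
        apply hKmin _ hlt
        refine ⟨f, hfF, ?_⟩
        conv_lhs => rw [hft]
        apply seg_infix_of_le (by omega) (by omega)
      set s₀ := i + 1 + μ i + t with hs₀
      have hfs₀ : seg a s₀ f.length ∈ M.F := by rw [← hft]; exact hfF
      obtain ⟨-, hflen⟩ := S1b s₀ f.length (by omega) hfs₀
      -- find the tile containing position i
      obtain ⟨j, hj1, hj2⟩ := T7 (i - 1)
      have hv : P (j + 1) ≤ i + μ i - 1 := by
        by_contra hcon
        push_neg at hcon
        -- the tile s j contains the interval at i, contradiction
        apply (htnz j).2
        refine ⟨seg a i (μ i + 1), hFi, ?_⟩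
        rw [T5 j]
        apply seg_infix_of_le (by omega)
        have := hPsucc j
        omega
      -- the interval at the cut position P (j+1) + 1
      set v := P (j + 1) with hvdef
      have hmemB := T6 (j + 1)
      obtain ⟨-, hBlen⟩ := S1b (v + 1) _ (by omega) hmemB
      rw [hBlen] at hmemB
      -- its endpoint is at least i + K
      have hBend : i + K ≤ v + 1 + μ (v + 1) - 1 + 1 := by
        by_contra hcon
        push_neg at hcon
        apply hKmin (K - 1) (by omega)
        refine ⟨_, hmemB, ?_⟩
        apply seg_infix_of_le (by omega) (by omega)
      -- but then the relation f is a proper infix of the interval at v+1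
      have hfinfB : seg a s₀ f.length <:+: seg a (v + 1) (μ (v + 1) + 1) := by
        apply seg_infix_of_le (by omega) (by omega)
      have := M.F_min _ hmemB _ hfinfB ⟨_, hfs₀, List.infix_refl _⟩
      have hlen := congrArg List.length this
      simp only [seg_length] at hlen
      omega
    · -- the main case: the partner of q i lies along the cycle
      obtain ⟨σ, hσ1, -⟩ := exists_pair_right (hQ2 i)
      have hq'ne : seg a (i + 1 + μ i) (K - μ i) ≠ [] := seg_ne_nil _ _ _ (by omega)
      have hq'nz : M.Nonzero (seg a (i + 1 + μ i) (K - μ i)) :=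
        ⟨path_seg _ _ (by omega), hq'z⟩
      have hcomp : M.toQuiverData.Composable (q i) (seg a (i + 1 + μ i) (K - μ i)) := by
        intro u hu v hv
        rw [hqi, seg_getLast a (i + 1) (μ i) (by omega)] at hu
        rw [seg_head a (i + 1 + μ i) (K - μ i) (by omega)] at hv
        cases hu; cases hv
        have := hadj (i + μ i) (by omega)
        rw [show i + 1 + μ i - 1 = i + μ i by omega]
        rwa [show i + μ i + 1 = i + 1 + μ i by omega] at this
      have hzcat : M.IsZero (q i ++ seg a (i + 1 + μ i) (K - μ i)) := by
        rw [hqi, seg_append, show μ i + (K - μ i) = K by omega]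
        exact hK
      have hpref := hσ1.2.2.2.2.2.2.1 _ hq'ne hq'nz hcomp hzcat
      obtain ⟨hσeq, -⟩ := eq_seg_of_prefix hpref
      have hσne : σ ≠ [] := hσ1.2.1
      have hcat : q i ++ σ ∈ M.F := pair_concat_mem_F hσ1
      rw [hqi, hσeq, seg_append] at hcat
      exact ⟨_, hcat⟩
  -- every position starts a relation interval
  have S1 : ∀ i, 1 ≤ i → ∃ d, seg a i d ∈ M.F := by
    have base : ∃ d, seg a 1 d ∈ M.F := by
      have := T6 0
      rw [hP0] at this
      exact ⟨_, this⟩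
    intro i hi
    induction i with
    | zero => omega
    | succ i ih =>
      rcases Nat.eq_or_lt_of_le hi with h | h
      · have h0 : i = 0 := by omega
        subst h0
        exact base
      · exact hstep i (by omega) (ih (by omega))
  -- monotonicity and periodicity force the interval lengths to be constant
  have hFint : ∀ i, 1 ≤ i → seg a i (μ i + 1) ∈ M.F := by
    intro i hi
    obtain ⟨d, hFi⟩ := S1 i hi
    obtain ⟨-, rfl⟩ := S1b i d hi hFi
    exact hFi
  have S2 : ∀ i, 1 ≤ i → μ i ≤ μ (i + 1) := by
    intro i hi
    by_contra hcon
    push_neg at hcon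
    have hA := hFint i hi
    have hB := hFint (i + 1) (by omega)
    have hinf : seg a (i + 1) (μ (i + 1) + 1) <:+: seg a i (μ i + 1) :=
      seg_infix_of_le (by omega) (by omega)
    have := M.F_min _ hA _ hinf ⟨_, hB, List.infix_refl _⟩
    have hlen := congrArg List.length this
    simp only [seg_length] at hlen
    omega
  have hμmono : ∀ i j, 1 ≤ i → i ≤ j → μ i ≤ μ j := by
    intro i j hi hij
    induction j with
    | zero => omega
    | succ j ih =>
      rcases Nat.lt_or_ge i (j + 1) with h | h
      · exact le_trans (ih (by omega)) (S2 j (by omega))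
      · have : i = j + 1 := by omega
        rw [this]
  have hμper' : ∀ k C, μ (k + C * n) = μ k := by
    intro k C
    induction C with
    | zero => simp
    | succ C ih => rw [show k + (C + 1) * n = k + C * n + n by ring, hμper, ih]
  have hμconst : ∀ i, 1 ≤ i → μ i = μ 1 := by
    intro i hi
    have h1' : μ 1 ≤ μ i := hμmono 1 i le_rfl hi
    have h2' : μ i ≤ μ (1 + i * n) := hμmono i (1 + i * n) hi (by nlinarith [hn])
    rw [show (1 : ℕ) + i * n = 1 + i * n from rfl, hμper' 1 i] at h2'
    omega
  set m' := μ 1 with hm'def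
  have hm'pos : 1 ≤ m' := hμpos 1
  -- interface lemmas
  have H1 : ∀ i, 1 ≤ i → seg a i (m' + 1) ∈ M.F := by
    intro i hi
    have := hFint i hi
    rwa [hμconst i hi] at this
  have NZseg : ∀ i d, 1 ≤ i → d ≤ m' → M.Nonzero (seg a i d) := by
    intro i d hi hd
    refine ⟨path_seg d i hi, ?_⟩
    rintro ⟨f, hf, hinf⟩
    obtain ⟨t, htle, hft⟩ := eq_seg_of_infix hinf
    have hfs : seg a (i + t) f.length ∈ M.F := by rw [← hft]; exact hf
    obtain ⟨-, hflen⟩ := S1b (i + t) _ (by omega) hfs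
    have := hμconst (i + t) (by omega)
    omega
  have NZbound : ∀ i d, 1 ≤ i → M.Nonzero (seg a i d) → d ≤ m' := by
    intro i d hi hnz
    by_contra hcon
    push_neg at hcon
    apply hnz.2
    exact ⟨_, H1 i hi, seg_infix_of_le (le_refl i) (by omega)⟩
  have Hq : ∀ i, 1 ≤ i → q i = seg a (i + 1) m' := by
    intro i hi
    obtain ⟨hq1, -⟩ := S1b i _ hi (hFint i hi)
    rwa [hμconst i hi] at hq1
  -- right rigidity: every relation starting with `a i` continues along the cycle
  have H2 : ∀ i tail, 1 ≤ i → (a i :: tail) ∈ M.F → tail ≠ [] → seg a (i + 1) m' <+: tail := by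
    intro i tail hi hf htne
    have htnz : M.Nonzero tail := by
      apply F_nonzero_of_infix hf
      · exact (List.suffix_cons _ _).isInfix
      · simp
    have hcomp : M.toQuiverData.Composable [a i] tail := by
      intro u hu v hv
      cases hu
      have hpath := M.F_path _ hf
      have := (List.isChain_cons.1 hpath).1
      exact this v hv
    have hz : M.IsZero ([a i] ++ tail) := ⟨_, hf, by simp⟩
    have h5 : q i <+: tail := (hQ1 i).2.2.2.2.2.2.1 _ htne htnz hcomp hz
    rwa [Hq i hi] at h5
  -- identification of the left partners
  have Hp : ∀ j, 1 ≤ j → pL (j + m') = seg a j m' := by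
    intro j hj
    have hint : seg a j (m' + 1) ∈ M.F := H1 j hj
    have hsplit : seg a j (m' + 1) = seg a j m' ++ [a (j + m')] := by
      rw [← seg_one a (j + m'), seg_append]
    have hlmin := (hQ3 (j + m')).2.2.2.2.2.2.2
    have hp' := hlmin (seg a j m') (seg_ne_nil _ _ _ (by omega)) (NZseg j m' hj le_rfl)
      (by
        intro u hu v hv
        rw [seg_getLast a j m' (by omega)] at hu
        cases hu
        cases hv
        have := hadj (j + m' - 1) (by omega)
        rwa [show j + m' - 1 + 1 = j + m' by omega] at this)
      ⟨_, hint, by rw [hsplit]⟩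
    have hp'' : pL (j + m') <:+ seg a j m' := hp'
    obtain ⟨hp1, hp2⟩ := eq_seg_of_suffix hp''
    have hcat : pL (j + m') ++ [a (j + m')] ∈ M.F := pair_concat_mem_F (hQ3 (j + m'))
    rw [hp1] at hcat ⊢
    set ν := (pL (j + m')).length with hνdef
    have hcat' : seg a (j + (m' - ν)) (ν + 1) ∈ M.F := by
      rwa [← seg_one a (j + m'), show j + m' = j + (m' - ν) + ν by omega, seg_append] at hcat
    obtain ⟨-, hν1⟩ := S1b (j + (m' - ν)) _ (by omega) hcat'
    have := hμconst (j + (m' - ν)) (by omega)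
    have hνm : ν = m' := by omega
    rw [hνm]
    congr 1
    omega
  -- left rigidity: every relation ending with `a (j + m')` comes along the cycle
  have H3 : ∀ j front, 1 ≤ j → (front ++ [a (j + m')]) ∈ M.F → front ≠ [] →
      seg a j m' <:+ front := by
    intro j front hj hf hfne
    have hfnz : M.Nonzero front := by
      apply F_nonzero_of_infix hf
      · exact (List.prefix_append _ _).isInfix
      · simp
    have hcomp : M.toQuiverData.Composable front [a (j + m')] := by
      intro u hu v hv
      cases hv
      have hpath := M.F_path _ hf
      exact (List.isChain_append.1 hpath).2.2 u hu _ rfl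
    have hz : M.IsZero (front ++ [a (j + m')]) := ⟨_, hf, List.infix_refl _⟩
    have h5 : pL (j + m') <:+ front := (hQ3 (j + m')).2.2.2.2.2.2.2 _ hfne hfnz hcomp hz
    rwa [Hp j hj] at h5
  have segpre : ∀ (z d1 d2 : ℕ), d1 ≤ d2 → seg a z d1 <+: seg a z d2 := by
    intro z d1 d2 h
    refine ⟨seg a (z + d1) (d2 - d1), ?_⟩
    rw [seg_append]
    congr 1
    omega
  have cancelR : ∀ (v w x : List E), v ++ w <:+ x ++ w → v <:+ x := by
    intro v w x ⟨u, hu⟩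
    rw [← List.append_assoc] at hu
    exact ⟨u, List.append_cancel_right hu⟩
  -- Lemma X, for large base points
  have XP0 : ∀ i d, m' + 1 ≤ i → 1 ≤ d → d ≤ m' →
      M.PerfectPair (seg a i d) (seg a (i + d) (m' + 1 - d)) := by
    intro i d hi hd1 hd2
    have hcatF : seg a i d ++ seg a (i + d) (m' + 1 - d) = seg a i (m' + 1) := by
      rw [seg_append]
      congr 1
      omega
    refine ⟨seg_ne_nil _ _ _ (by omega), seg_ne_nil _ _ _ (by omega),
      NZseg i d (by omega) hd2, NZseg (i + d) (m' + 1 - d) (by omega) (by omega),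
      ?_, ?_, ?_, ?_⟩
    · intro u hu v hv
      rw [seg_getLast a i d (by omega)] at hu
      rw [seg_head a (i + d) _ (by omega)] at hv
      cases hu; cases hv
      have := hadj (i + d - 1) (by omega)
      rwa [show i + d - 1 + 1 = i + d by omega] at this
    · rw [hcatF]
      exact ⟨_, H1 i (by omega), List.infix_refl _⟩
    · -- right minimality
      intro q' hq'ne hq'nz hcomp hz
      obtain ⟨f, hfF, hfinf⟩ := hz
      have hfp : ¬ f <:+: seg a i d := fun h => (NZseg i d (by omega) hd2).2 ⟨f, hfF, h⟩
      have hfq : ¬ f <:+: q' := fun h => hq'nz.2 ⟨f, hfF, h⟩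
      obtain ⟨x, y, hxne, hyne, hxs, hyp, hfxy⟩ := straddle hfinf hfp hfq
      obtain ⟨hx1, hx2⟩ := eq_seg_of_suffix hxs
      have hxpos : 1 ≤ x.length := List.length_pos_iff.2 hxne
      have hxsplit : x = a (i + (d - x.length)) ::
          seg a (i + (d - x.length) + 1) (x.length - 1) := by
        obtain ⟨xl, hxl⟩ : ∃ xl, x.length = xl + 1 := ⟨x.length - 1, by omega⟩
        conv_lhs => rw [hx1]
        rw [hxl, seg_succ, Nat.add_sub_cancel]
      have hftail : f = a (i + (d - x.length)) ::
          (seg a (i + (d - x.length) + 1) (x.length - 1) ++ y) := by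
        rw [hfxy]
        conv_lhs => rw [hxsplit]
        rw [List.cons_append]
      have hmemf : (a (i + (d - x.length)) ::
          (seg a (i + (d - x.length) + 1) (x.length - 1) ++ y)) ∈ M.F := by
        rwa [hftail] at hfF
      have hpref2 := H2 (i + (d - x.length)) _ (by omega) hmemf (by simp [hyne])
      have hmsplit : seg a (i + (d - x.length) + 1) m' =
          seg a (i + (d - x.length) + 1) (x.length - 1) ++
            seg a (i + d) (m' - (x.length - 1)) := by
        have h6 := seg_append a (i + (d - x.length) + 1) (x.length - 1) (m' - (x.length - 1))
        rw [show i + (d - x.length) + 1 + (x.length - 1) = i + d by omega] at h6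
        rw [h6]
        congr 1
        omega
      rw [hmsplit] at hpref2
      have hy2 := (List.prefix_append_right_inj _).1 hpref2
      calc seg a (i + d) (m' + 1 - d) <+: seg a (i + d) (m' - (x.length - 1)) :=
            segpre _ _ _ (by omega)
        _ <+: y := hy2
        _ <+: q' := hyp
    · -- left minimality
      intro p' hp'ne hp'nz hcomp hz
      obtain ⟨f, hfF, hfinf⟩ := hz
      have hfp : ¬ f <:+: p' := fun h => hp'nz.2 ⟨f, hfF, h⟩
      have hfq : ¬ f <:+: seg a (i + d) (m' + 1 - d) := fun h =>
        (NZseg (i + d) (m' + 1 - d) (by omega) (by omega)).2 ⟨f, hfF, h⟩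
      obtain ⟨x, y, hxne, hyne, hxs, hyp, hfxy⟩ := straddle hfinf hfp hfq
      obtain ⟨hy1, hy2⟩ := eq_seg_of_prefix hyp
      have hypos : 1 ≤ y.length := List.length_pos_iff.2 hyne
      have hysplit : y = seg a (i + d) (y.length - 1) ++ [a (i + d + y.length - 1)] := by
        conv_lhs => rw [hy1]
        rw [show y.length = (y.length - 1) + 1 by omega, ← seg_append, seg_one]
        congr 3
        omega
      have hfr : f = (x ++ seg a (i + d) (y.length - 1)) ++ [a (i + d + y.length - 1)] := by
        rw [hfxy]
        conv_lhs => rw [hysplit]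
        rw [List.append_assoc]
      have hj0 : i + d + y.length - 1 = (i + d + y.length - 1 - m') + m' := by omega
      have hmemf : ((x ++ seg a (i + d) (y.length - 1)) ++
          [a ((i + d + y.length - 1 - m') + m')]) ∈ M.F := by
        rw [← hj0, ← hfr]
        exact hfF
      have hsuf2 := H3 (i + d + y.length - 1 - m') _ (by omega) hmemf (by simp [hxne])
      have hmsplit : seg a (i + d + y.length - 1 - m') m' =
          (seg a (i + d + y.length - 1 - m') (m' + 1 - y.length - d) ++ seg a i d) ++
            seg a (i + d) (y.length - 1) := by
        have h8 := seg_append a i d (y.length - 1)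
        have h6 := seg_append a (i + d + y.length - 1 - m') (m' + 1 - y.length - d)
          (d + (y.length - 1))
        rw [show i + d + y.length - 1 - m' + (m' + 1 - y.length - d) = i by omega] at h6
        rw [List.append_assoc, h8, h6]
        congr 1
        omega
      rw [hmsplit] at hsuf2
      have hx2 := cancelR _ _ _ hsuf2
      calc seg a i d <:+ seg a (i + d + y.length - 1 - m') (m' + 1 - y.length - d) ++
            seg a i d := List.suffix_append _ _
        _ <:+ x := hx2
        _ <:+ p' := hxs
  -- Lemma X in general, by periodicity
  have XP : ∀ i d, 1 ≤ i → 1 ≤ d → d ≤ m' →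
      M.PerfectPair (seg a i d) (seg a (i + d) (m' + 1 - d)) := by
    intro i d hi hd1 hd2
    have h := XP0 (i + (m' + 1) * n) d (by nlinarith) hd1 hd2
    rwa [seg_period' hper, show i + (m' + 1) * n + d = i + d + (m' + 1) * n by omega,
      seg_period' hper] at h
  -- all short segments are perfect
  have XPerf : ∀ i d, 1 ≤ i → 1 ≤ d → d ≤ m' → M.IsPerfect (seg a i d) := by
    intro i d hi hd1 hd2
    refine ⟨2 * n, fun j =>
      if j % 2 = 0 then seg a (i + (j / 2) * (m' + 1)) d
      else seg a (i + (j / 2) * (m' + 1) + d) (m' + 1 - d), by omega, by norm_num, ?_, ?_⟩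
    · intro j
      have h2 : (j + 2 * n) % 2 = j % 2 := by omega
      have h3 : (j + 2 * n) / 2 = j / 2 + n := by omega
      by_cases hj : j % 2 = 0
      · simp only [h2, h3, hj, if_pos]
        rw [show i + (j / 2 + n) * (m' + 1) = i + (j / 2) * (m' + 1) + (m' + 1) * n by ring,
          seg_period' hper]
      · simp only [h2, h3, hj, if_neg, ite_false]
        rw [show i + (j / 2 + n) * (m' + 1) + d = i + (j / 2) * (m' + 1) + d + (m' + 1) * n
          by ring, seg_period' hper]
    · intro j
      by_cases hj : j % 2 = 0
      · have h4 : (j + 1) % 2 ≠ 0 := by omega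
        have h5 : (j + 1) / 2 = j / 2 := by omega
        simp only [hj, h4, h5, if_pos, if_neg, ite_false]
        exact XP _ d (by omega) hd1 hd2
      · have h4 : (j + 1) % 2 = 0 := by omega
        have h5 : (j + 1) / 2 = j / 2 + 1 := by omega
        simp only [hj, h4, h5, if_neg, if_pos, ite_false]
        have h := XP (i + (j / 2) * (m' + 1) + d) (m' + 1 - d) (by omega) (by omega) (by omega)
        rw [show i + (j / 2) * (m' + 1) + d + (m' + 1 - d) = i + (j / 2 + 1) * (m' + 1)
          by ring_nf; omega, show m' + 1 - (m' + 1 - d) = d by omega] at h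
        exact h
  -- classification of perfect paths starting with the arrow a 1
  have CL : ∀ p, M.IsPerfect p → [a 1] <+: p → ∃ j, 1 ≤ j ∧ j ≤ m' ∧ p = seg a 1 j := by
    intro p hperf hpre
    obtain ⟨Rp, hRpair, -⟩ := exists_pair_right hperf
    have hcat : p ++ Rp ∈ M.F := pair_concat_mem_F hRpair
    obtain ⟨rest, hrest⟩ := hpre
    have hRpne : Rp ≠ [] := hRpair.2.1
    have hsh : p ++ Rp = a 1 :: (rest ++ Rp) := by rw [← hrest]; simp
    have hcat' : (a 1 :: (rest ++ Rp)) ∈ M.F := by rwa [hsh] at hcat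
    have hpref2 := H2 1 (rest ++ Rp) le_rfl hcat' (by simp [hRpne])
    have hpm : seg a 1 (m' + 1) <+: p ++ Rp := by
      obtain ⟨w, hw⟩ := hpref2
      refine ⟨w, ?_⟩
      rw [hsh, seg_succ, List.cons_append, hw]
    have heq := F_prefix_eq (H1 1 le_rfl) hcat hpm
    have hlen := congrArg List.length heq
    simp only [seg_length, List.length_append] at hlen
    have hppos : 1 ≤ p.length := by
      rw [← hrest]
      simp
    have hRpos : 1 ≤ Rp.length := List.length_pos_iff.2 hRpne
    refine ⟨p.length, hppos, by omega, ?_⟩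
    have hptake : p = (p ++ Rp).take p.length := by rw [List.take_left]
    rw [← heq, seg_take] at hptake
    conv_lhs => rw [hptake]
    congr 1
    omega
  exact ⟨m', hm'pos, H1, XPerf, CL, NZbound⟩

end CSZ

namespace CSZ

open MonomialData

variable {V E : Type} {M : MonomialData V E}

lemma nzArrow (M : MonomialData V E) (x : E) : M.Nonzero [x] := by
  refine ⟨List.isChain_singleton x, ?_⟩
  rintro ⟨f, hf, hinf⟩
  have h1 := M.F_len f hf
  have h2 := hinf.length_le
  simp at h2
  omega

lemma flatten_singletons : ∀ (l : List ℕ) (f : ℕ → E),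
    (l.map (fun x => [f x])).flatten = l.map f := by
  intro l f
  induction l with
  | nil => simp
  | cons x tl ih => simp [ih]

lemma sum_ge_length : ∀ L : List ℕ, (∀ x ∈ L, 1 ≤ x) → L.length ≤ L.sum := by
  intro L hL
  induction L with
  | nil => simp
  | cons x tl ih =>
    simp only [List.length_cons, List.sum_cons]
    have h1 := hL x (by simp)
    have h2 := ih (fun y hy => hL y (by simp [hy]))
    omega

lemma all_one_of_sum_eq : ∀ L : List ℕ, (∀ x ∈ L, 1 ≤ x) → L.sum = L.length →
    ∀ x ∈ L, x = 1 := by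
  intro L hL hsum
  induction L with
  | nil => simp
  | cons y tl ih =>
    intro x hx
    simp only [List.sum_cons, List.length_cons] at hsum
    have h1 := hL y (by simp)
    have h2 := sum_ge_length tl (fun z hz => hL z (by simp [hz]))
    rcases List.mem_cons.1 hx with h | h
    · omega
    · exact ih (fun z hz => hL z (by simp [hz])) (by omega) x h

lemma singleton_mem_of_all_len_one : ∀ (rs : List (List E)), (∀ s ∈ rs, s.length = 1) →
    ∀ x ∈ rs.flatten, [x] ∈ rs := by
  intro rs h x hx
  induction rs with
  | nil => simp at hx
  | cons s tl ih =>
    rw [List.flatten_cons] at hx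
    rcases List.mem_append.1 hx with h' | h'
    · obtain ⟨z, rfl⟩ := List.length_eq_one_iff.1 (h s (by simp))
      simp at h'
      subst h'
      exact List.mem_cons_self
    · exact List.mem_cons_of_mem _ (ih (fun u hu => h u (by simp [hu])) h')

end CSZ

open CSZ MonomialData

/-- for an underlying cycle `c = a₁ ⋯ aₙ` consisting of arrows
`aᵢ` (indices mod `n`), the following are equivalent: (1) each arrow `aᵢ` is
perfect; (2) the number of co-elementary factors of `c` equals its length;
(3) (a) every nonzero nontrivial subpath `p` of a power of `c` with `pq ∈ 𝔽`
for some path `q` is perfect, and (b) `aᵢ ⋯ a_{i+m_c} ∈ 𝔽` for all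
`1 ≤ i ≤ n`, where `m_c` is the number of perfect paths having the first
co-elementary factor of `c` as a left divisor. -/
theorem arrows_perfect_tfae {V E : Type} (M : MonomialData V E)
    (n : ℕ) (hn : 0 < n) (a : ℕ → E)
    (hper : ∀ k, a (k + n) = a k)
    (hc : ∃ p, M.IsUnderlyingCycleOf ((List.range n).map fun k => a (k + 1)) p)
    (r1 : List E) (m : ℕ)
    (hfac : ∃ rs : List (List E), rs ≠ [] ∧ (∀ s ∈ rs, M.CoElementary s) ∧
      rs.flatten = (List.range n).map (fun k => a (k + 1)) ∧
      rs.head? = some r1)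
    (hm : {p : List E | M.IsPerfect p ∧ r1 <+: p}.ncard = m) :
    ((∀ k, M.IsPerfect [a k]) ↔
      (∃ rs : List (List E), rs ≠ [] ∧ (∀ s ∈ rs, M.CoElementary s) ∧
        rs.flatten = (List.range n).map (fun k => a (k + 1)) ∧
        rs.length = n)) ∧
    ((∀ k, M.IsPerfect [a k]) ↔
      ((∀ (mm : ℕ) (p : List E), 0 < mm → p ≠ [] → M.Nonzero p →
          p <:+: (List.replicate mm
            ((List.range n).map fun k => a (k + 1))).flatten →
          (∃ q, (p ++ q) ∈ M.F) → M.IsPerfect p) ∧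
        (∀ i, 1 ≤ i → i ≤ n →
          ((List.range (m + 1)).map fun t => a (i + t)) ∈ M.F))) := by
  classical
  have hceq : ((List.range n).map fun k => a (k + 1)) = seg a 1 n := by
    apply List.map_congr_left
    intro t _
    congr 1
    omega
  have hrep : ∀ L : ℕ, (List.replicate L (seg a 1 n)).flatten = seg a 1 (L * n) := by
    intro L
    induction L with
    | zero => simp
    | succ L ih =>
      rw [List.replicate_succ, List.flatten_cons, ih, ← seg_period hper 1 (L * n), seg_append]
      congr 1
      ring
  have hred : ∀ k : ℕ, ∃ i, 1 ≤ i ∧ i ≤ n ∧ a k = a i := by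
    intro k
    have h0 : a k = a (k % n) := by
      conv_lhs => rw [show k = k % n + (k / n) * n by rw [Nat.mod_add_div' k n]]
      rw [a_period' hper]
    rcases Nat.eq_zero_or_pos (k % n) with h | h
    · refine ⟨n, by omega, le_rfl, ?_⟩
      rw [h0, h, ← hper 0, Nat.zero_add]
    · exact ⟨k % n, h, (Nat.mod_lt _ hn).le, h0⟩
  constructor
  · -- (1) ↔ (2)
    constructor
    · intro h1
      refine ⟨(List.range n).map (fun k => [a (k + 1)]), ?_, ?_, ?_, by simp⟩
      · apply List.ne_nil_of_length_pos
        simpa using hn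
      · intro s hs
        obtain ⟨k, -, rfl⟩ := List.mem_map.1 hs
        refine ⟨h1 (k + 1), ?_⟩
        rintro ⟨qq, hqperf, ⟨w, hw⟩, hqne⟩
        cases qq with
        | nil => exact IsPerfect_ne_nil hqperf rfl
        | cons y ys =>
          rw [List.cons_append] at hw
          obtain ⟨hy, hys⟩ := List.cons.injEq _ _ _ _ ▸ hw
          have hys0 : ys = [] := (List.append_eq_nil_iff.1 hys).1
          subst hys0 hy
          exact hqne rfl
      · exact flatten_singletons (List.range n) (fun k => a (k + 1))
    · rintro ⟨rs, hrsne, hco, hflat, hlen⟩ k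
      have hall1 : ∀ s ∈ rs, s.length = 1 := by
        have hsum : (rs.map List.length).sum = n := by
          have := congrArg List.length hflat
          rwa [List.length_flatten, List.length_map, List.length_range] at this
        intro s hs
        have h1le : ∀ x ∈ rs.map List.length, 1 ≤ x := by
          intro x hx
          obtain ⟨u, hu, rfl⟩ := List.mem_map.1 hx
          exact List.length_pos_iff.2 (IsPerfect_ne_nil (hco u hu).1)
        have := all_one_of_sum_eq (rs.map List.length) h1le
          (by rw [hsum, List.length_map, hlen]) s.length (List.mem_map_of_mem (f := List.length) hs)
        exact this
      obtain ⟨i, hi1, hin, hik⟩ := hred k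
      have hmem : a i ∈ rs.flatten := by
        rw [hflat]
        exact List.mem_map.2 ⟨i - 1, List.mem_range.2 (by omega), by congr 1; omega⟩
      have := singleton_mem_of_all_len_one rs hall1 _ hmem
      rw [hik]
      exact (hco _ this).1
  · -- (1) ↔ (3)
    constructor
    · intro h1
      obtain ⟨m', hm'pos, H1, XPerf, CL, NZbound⟩ := forward n hn a hper hc h1
      -- identify r1 with [a 1]
      obtain ⟨rs, hrsne, hco, hflat, hhead⟩ := hfac
      have hr1mem : r1 ∈ rs := by
        cases rs with
        | nil => simp at hhead
        | cons u tl =>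
          simp only [List.head?_cons, Option.some.injEq] at hhead
          rw [← hhead]
          exact List.mem_cons_self
      have hr1co := hco r1 hr1mem
      have hr1ne : r1 ≠ [] := IsPerfect_ne_nil hr1co.1
      have hr1pre : r1 <+: seg a 1 n := by
        cases rs with
        | nil => simp at hhead
        | cons u tl =>
          simp only [List.head?_cons, Option.some.injEq] at hhead
          subst hhead
          rw [List.flatten_cons, hceq] at hflat
          exact ⟨tl.flatten, hflat⟩
      obtain ⟨hr1eq, hr1le⟩ := eq_seg_of_prefix hr1pre
      have hr1a : [a 1] <+: r1 := by
        rw [hr1eq, show r1.length = (r1.length - 1) + 1 by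
          have := List.length_pos_iff.2 hr1ne; omega, seg_succ]
        exact ⟨seg a 2 (r1.length - 1), rfl⟩
      have hr1 : r1 = [a 1] := by
        by_contra hne
        exact hr1co.2 ⟨[a 1], h1 1, hr1a, fun h => hne h.symm⟩
      -- compute the cardinality
      have hset : {p : List E | M.IsPerfect p ∧ r1 <+: p} =
          ↑((Finset.Icc 1 m').image (fun j => seg a 1 j)) := by
        ext p
        simp only [Set.mem_setOf_eq, Finset.coe_image, Set.mem_image, Finset.mem_coe,
          Finset.mem_Icc]
        constructor
        · rintro ⟨hperf, hpre⟩
          rw [hr1] at hpre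
          obtain ⟨j, hj1, hj2, rfl⟩ := CL p hperf hpre
          exact ⟨j, ⟨hj1, hj2⟩, rfl⟩
        · rintro ⟨j, ⟨hj1, hj2⟩, rfl⟩
          refine ⟨XPerf 1 j le_rfl hj1 hj2, ?_⟩
          rw [hr1, show j = (j - 1) + 1 by omega, seg_succ]
          exact ⟨seg a 2 (j - 1), rfl⟩
      rw [hset, Set.ncard_coe_finset, Finset.card_image_of_injOn, Nat.card_Icc] at hm
      swap
      · intro j₁ _ j₂ _ heq
        have := congrArg List.length heq
        simpa using this
      have hmm' : m = m' := by omega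
      subst hmm'
      constructor
      · intro mm p hmm0 hpne hpnz hinf ⟨qq, hqq⟩
        rw [hceq, hrep] at hinf
        obtain ⟨t, htle, hpt⟩ := eq_seg_of_infix hinf
        have hplen : 1 ≤ p.length := List.length_pos_iff.2 hpne
        rw [hpt] at hpnz ⊢
        exact XPerf (1 + t) p.length (by omega) hplen (NZbound (1 + t) _ (by omega) hpnz)
      · intro i hi1 hin
        exact H1 i hi1
    · rintro ⟨ha, hb⟩ k
      obtain ⟨i, hi1, hin, hik⟩ := hred k
      rw [show ([a k] : List E) = seg a i 1 by rw [seg_one, hik]]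
      apply ha 1 _ one_pos (seg_ne_nil a i 1 one_pos) ⟨List.isChain_singleton _, by
        rintro ⟨f, hf, hinf⟩
        have h1' := M.F_len f hf
        have h2' := hinf.length_le
        simp at h2'
        omega⟩
      · rw [show (List.replicate 1 ((List.range n).map fun k => a (k + 1))).flatten =
          seg a 1 n by rw [List.replicate_one, List.flatten_cons, List.flatten_nil,
            List.append_nil, hceq]]
        exact seg_infix_of_le hi1 (by omega)
      · refine ⟨seg a (i + 1) m, ?_⟩
        have hsplit : seg a i 1 ++ seg a (i + 1) m = seg a i (m + 1) := by
          rw [seg_append]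
          congr 1
          omega
        rw [hsplit]
        exact hb i hi1 hin
end
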